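/- arXiv:2002.06263 — 4 statements merged into one kernel-verified Lean document; each statement's English description precedes it below -/
import Mathlib

section
/- Let L be a Lévy sheet with exponent Ψ(ξ) = a(ξ) + ib(ξ), θ ∈ (0,2π) with a(θ) > 0. Then for 0 ≤ x₁ ≤ x₂, 0 ≤ y₂ ≤ y₁, E[exp(iθ L(x₁,y₁) + iθ L(x₂,y₂))] has modulus at most exp(−[(x₂−x₁)y₂ + (y₁−y₂)x₁] a(θ)). -/
open MeasureTheory Set

/-- For a Lévy sheet `L` with exponent `Ψ = a + ib`, `θ ∈ (0,2π)` with `a(θ) > 0`,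
and `0 ≤ x₁ ≤ x₂`, `0 ≤ y₂ ≤ y₁`,
`|E[exp(iθL(x₁,y₁) + iθL(x₂,y₂))]| ≤ exp(−[(x₂−x₁)y₂ + (y₁−y₂)x₁] a(θ))`. -/
theorem levy_sheet_joint_char_modulus_bound
    {Ω : Type*} [MeasurableSpace Ω] (μ : Measure Ω) [IsProbabilityMeasure μ]
    (L : ℝ → ℝ → Ω → ℝ) (a b : ℝ → ℝ) (Ψ : ℝ → ℂ)
    (hLmeas : Measurable fun q : ℝ × ℝ × Ω => L q.1 q.2.1 q.2.2)
    (hΨ : ∀ ξ, Ψ ξ = (a ξ : ℂ) + (b ξ : ℂ) * Complex.I)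
    (ha : ∀ ξ, 0 ≤ a ξ)
    (hzero : ∀ x y ω, L x 0 ω = 0 ∧ L 0 y ω = 0)
    -- Lévy sheet: joint characteristic function of increments over pairwise
    -- disjoint rectangles (encodes independence and the Lévy–Khintchine formula)
    (hchar : ∀ (k : ℕ) (s t s' t' ξ : ℕ → ℝ),
      (∀ j, j < k → 0 ≤ s j ∧ s j ≤ s' j ∧ 0 ≤ t j ∧ t j ≤ t' j) →
      (∀ i j, i < k → j < k → i ≠ j →
        Disjoint (Ioc (s i) (s' i) ×ˢ Ioc (t i) (t' i))
                 (Ioc (s j) (s' j) ×ˢ Ioc (t j) (t' j))) →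
      ∫ ω, Complex.exp (Complex.I *
          (∑ j ∈ Finset.range k, (ξ j : ℂ) *
            ((L (s' j) (t' j) ω - L (s' j) (t j) ω - L (s j) (t' j) ω
               + L (s j) (t j) ω : ℝ) : ℂ))) ∂μ
        = Complex.exp (-∑ j ∈ Finset.range k,
            (((s' j - s j) * (t' j - t j) : ℝ) : ℂ) * Ψ (ξ j)))
    (θ : ℝ) (hθ : θ ∈ Ioo (0:ℝ) (2 * Real.pi)) (haθ : 0 < a θ)
    (x₁ x₂ y₁ y₂ : ℝ) (hx0 : 0 ≤ x₁) (hx : x₁ ≤ x₂) (hy0 : 0 ≤ y₂) (hy : y₂ ≤ y₁) :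
    ‖∫ ω, Complex.exp (Complex.I * (θ : ℂ) * ((L x₁ y₁ ω + L x₂ y₂ ω : ℝ) : ℂ)) ∂μ‖
      ≤ Real.exp (-(((x₂ - x₁) * y₂ + (y₁ - y₂) * x₁) * a θ)) := by

  classical
  set s : ℕ → ℝ := fun j => if j = 1 then x₁ else 0 with hsdef
  set s' : ℕ → ℝ := fun j => if j = 1 then x₂ else x₁ with hs'def
  set t : ℕ → ℝ := fun j => if j = 2 then y₂ else 0 with htdef
  set t' : ℕ → ℝ := fun j => if j = 2 then y₁ else y₂ with ht'def
  set ξ : ℕ → ℝ := fun j => if j = 0 then 2*θ else θ with hξdef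
  have hbounds : ∀ j, j < 3 → 0 ≤ s j ∧ s j ≤ s' j ∧ 0 ≤ t j ∧ t j ≤ t' j := by
    intro j hj
    interval_cases j <;>
      refine ⟨?_, ?_, ?_, ?_⟩ <;>
      simp only [hsdef, hs'def, htdef, ht'def] <;> norm_num <;> linarith
  have hdisj : ∀ i j, i < 3 → j < 3 → i ≠ j →
      Disjoint (Ioc (s i) (s' i) ×ˢ Ioc (t i) (t' i))
               (Ioc (s j) (s' j) ×ˢ Ioc (t j) (t' j)) := by
    intro i j hi hj hij
    rw [Set.disjoint_left]
    rintro ⟨p, q⟩ ⟨hp, hq⟩ ⟨hp', hq'⟩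
    simp only [Set.mem_Ioc] at hp hq hp' hq'
    interval_cases i <;> interval_cases j <;>
      revert hij <;> norm_num [hsdef, hs'def, htdef, ht'def] at hp hq hp' hq' ⊢ <;>
      linarith [hp.1, hp.2, hq.1, hq.2, hp'.1, hp'.2, hq'.1, hq'.2]
  have key := hchar 3 s t s' t' ξ hbounds hdisj
  have hfun : ∀ ω : Ω, Complex.exp (Complex.I *
        (∑ j ∈ Finset.range 3, (ξ j : ℂ) *
          ((L (s' j) (t' j) ω - L (s' j) (t j) ω - L (s j) (t' j) ω
             + L (s j) (t j) ω : ℝ) : ℂ)))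
      = Complex.exp (Complex.I * (θ : ℂ) * ((L x₁ y₁ ω + L x₂ y₂ ω : ℝ) : ℂ)) := by
    intro ω
    congr 1
    have h1 := (hzero x₁ 0 ω).1
    have h2 := (hzero x₂ 0 ω).1
    have h3 := (hzero 0 y₂ ω).2
    have h4 := (hzero 0 y₁ ω).2
    have h5 := (hzero 0 0 ω).1
    rw [Finset.sum_range_succ, Finset.sum_range_succ, Finset.sum_range_one]
    simp only [hsdef, hs'def, htdef, ht'def, hξdef]
    norm_num [h1, h2, h3, h4, h5]
    push_cast
    ring
  simp only [hfun] at key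
  rw [key]
  have hsum : (∑ j ∈ Finset.range 3,
      (((s' j - s j) * (t' j - t j) : ℝ) : ℂ) * Ψ (ξ j))
      = ((x₁ * y₂ : ℝ) : ℂ) * Ψ (2*θ)
        + (((x₂ - x₁) * y₂ : ℝ) : ℂ) * Ψ θ + ((x₁ * (y₁ - y₂) : ℝ) : ℂ) * Ψ θ := by
    rw [Finset.sum_range_succ, Finset.sum_range_succ, Finset.sum_range_one]
    simp only [hsdef, hs'def, htdef, ht'def, hξdef]
    norm_num
    try push_cast
    try ring
  rw [hsum, Complex.norm_exp]
  apply Real.exp_le_exp.mpr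
  have hre : (-(((x₁ * y₂ : ℝ) : ℂ) * Ψ (2*θ)
        + (((x₂ - x₁) * y₂ : ℝ) : ℂ) * Ψ θ + ((x₁ * (y₁ - y₂) : ℝ) : ℂ) * Ψ θ)).re
      = -(x₁ * y₂ * a (2*θ) + (x₂ - x₁) * y₂ * a θ + x₁ * (y₁ - y₂) * a θ) := by
    simp [hΨ, Complex.add_re, Complex.mul_re]
    try ring
  rw [hre]
  nlinarith [ha (2*θ), mul_nonneg hx0 hy0]
end

section
/- Let L be a Lévy sheet with exponent Ψ = a + ib, m an even number, θ ∈ (0,2π) with a(θ)a(2θ)···a(mθ) ≠ 0, and set a*(θ) = min{a(θ),...,a(mθ)}. Fix 0 < s₀ < s₀' < 2s₀, 0 < t₀ < t₀' < 2t₀. Then for any points (x_j, y_j), j = 1,...,m, with s₀ < x_j < s₀' and t₀ < y_j < t₀': E[∏_{j=1}^m cos(θ L(√n x_j, √n y_j))] ≤ exp(−(n/2) a*(θ) Σ_{odd pairs} x_{(2k−1)}(y_{(2k)} − y_{(2k−1)})) · exp(−(n/2) a*(θ) Σ_{odd pairs} y_{(2k−1)}(x_{(2k)} − x_{(2k−1)})),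 where x_{(1)} ≤ ... ≤ x_{(m)} and y_{(1)} ≤ ... ≤ y_{(m)} are the sorted values and the sums run over k = 1,...,m/2 pairing consecutive order statistics. -/
open MeasureTheory Set

set_option maxHeartbeats 2000000

private lemma aux_mono (f : ℕ → ℝ) (N : ℕ) (h : ∀ i, i < N → f i ≤ f (i+1)) :
    ∀ i j, i ≤ j → j ≤ N → f i ≤ f j := by
  intro i j hij hjN
  induction j with
  | zero => exact le_of_eq (congrArg f (Nat.le_zero.mp hij))
  | succ k ih =>
    rcases Nat.eq_or_lt_of_le hij with h1 | h1
    · exact le_of_eq (congrArg f h1)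
    · exact le_trans (ih (by omega) (by omega)) (h k (by omega))

private lemma aux_grid {α : Type*} [AddCommMonoid α] (P Q : ℕ) (hQ : 0 < Q) (f : ℕ → ℕ → α) :
    ∑ e ∈ Finset.range (P*Q), f (e / Q) (e % Q)
      = ∑ i ∈ Finset.range P, ∑ j ∈ Finset.range Q, f i j := by
  induction P with
  | zero => simp
  | succ p ih =>
    rw [Nat.succ_mul, Finset.sum_range_add, ih, Finset.sum_range_succ]
    congr 1
    apply Finset.sum_congr rfl
    intro j hj
    have hjQ : j < Q := Finset.mem_range.mp hj
    have h1 : (p*Q+j)/Q = p := by rw [mul_comm, Nat.mul_add_div hQ, Nat.div_eq_of_lt hjQ, Nat.add_zero]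
    have h2 : (p*Q+j)%Q = j := by rw [mul_comm, Nat.mul_add_mod, Nat.mod_eq_of_lt hjQ]
    rw [h1, h2]

private lemma aux_ite {α : Type*} [AddCommMonoid α] (A : ℕ → α) (r P : ℕ) (h : r ≤ P) :
    ∑ i ∈ Finset.range P, (if i < r then A i else 0) = ∑ i ∈ Finset.range r, A i := by
  rw [← Finset.sum_filter]
  congr 1
  ext i
  simp only [Finset.mem_filter, Finset.mem_range]
  omega

private lemma aux_tel (f : ℝ → ℝ → ℝ) (u v : ℕ → ℝ) (hu0 : u 0 = 0) (hv0 : v 0 = 0)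
    (h0 : ∀ p, f p 0 = 0) (h0' : ∀ q, f 0 q = 0) (R C : ℕ) :
    ∑ i ∈ Finset.range R, ∑ i' ∈ Finset.range C,
      (f (u (i+1)) (v (i'+1)) - f (u (i+1)) (v i') - f (u i) (v (i'+1)) + f (u i) (v i'))
      = f (u R) (v C) := by
  have hinner : ∀ i, ∑ i' ∈ Finset.range C,
      (f (u (i+1)) (v (i'+1)) - f (u (i+1)) (v i') - f (u i) (v (i'+1)) + f (u i) (v i'))
      = (f (u (i+1)) (v C) - f (u i) (v C)) := by
    intro i
    have := Finset.sum_range_sub (fun i' => f (u (i+1)) (v i') - f (u i) (v i')) C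
    calc ∑ i' ∈ Finset.range C,
        (f (u (i+1)) (v (i'+1)) - f (u (i+1)) (v i') - f (u i) (v (i'+1)) + f (u i) (v i'))
        = ∑ i' ∈ Finset.range C,
          ((f (u (i+1)) (v (i'+1)) - f (u i) (v (i'+1))) - (f (u (i+1)) (v i') - f (u i) (v i'))) := by
          apply Finset.sum_congr rfl; intro i' _; ring
      _ = (f (u (i+1)) (v C) - f (u i) (v C)) - (f (u (i+1)) (v 0) - f (u i) (v 0)) := this
      _ = f (u (i+1)) (v C) - f (u i) (v C) := by rw [hv0, h0, h0]; ring
  rw [Finset.sum_congr rfl (fun i _ => hinner i), Finset.sum_range_sub (fun i => f (u i) (v C)) R,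
    hu0, h0']
  ring

private lemma aux_parity (m : ℕ) (T : Finset ℕ) (p : ℕ → Prop) [DecidablePred p]
    (hodd : Odd ((Finset.range m).filter p).card) :
    (∑ j ∈ Finset.range m, if p j then (if j ∈ T then (1:ℤ) else -1) else 0) ≠ 0 ∧
    (∑ j ∈ Finset.range m, if p j then (if j ∈ T then (1:ℤ) else -1) else 0).natAbs ≤ m := by
  constructor
  · intro h0
    have hcast : ((∑ j ∈ Finset.range m, if p j then (if j ∈ T then (1:ℤ) else -1) else 0 : ℤ)
        : ZMod 2) = 0 := by rw [h0]; simp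
    rw [Int.cast_sum] at hcast
    have heq : ∀ j, ((if p j then (if j ∈ T then (1:ℤ) else -1) else 0 : ℤ) : ZMod 2)
        = if p j then 1 else 0 := by
      intro j
      by_cases h1 : p j <;> by_cases h2 : j ∈ T <;> simp [h1, h2] <;> decide
    rw [Finset.sum_congr rfl (fun j _ => heq j), Finset.sum_boole] at hcast
    obtain ⟨t, ht⟩ := hodd
    rw [ht] at hcast
    push_cast at hcast
    simp [show ((2:ZMod 2) = 0) from rfl] at hcast
  · have habs : |∑ j ∈ Finset.range m, if p j then (if j ∈ T then (1:ℤ) else -1) else 0| ≤ (m:ℤ) := by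
      refine le_trans (Finset.abs_sum_le_sum_abs _ _) ?_
      calc ∑ j ∈ Finset.range m, |if p j then (if j ∈ T then (1:ℤ) else -1) else 0|
          ≤ ∑ _j ∈ Finset.range m, (1:ℤ) := by
            apply Finset.sum_le_sum; intro j _
            by_cases h1 : p j <;> by_cases h2 : j ∈ T <;> simp [h1, h2]
        _ = (m:ℤ) := by simp
    rw [Int.abs_eq_natAbs] at habs
    exact_mod_cast habs

private lemma count_perm (m k : ℕ) (τ : Equiv.Perm (Fin m)) (cidx : ℕ → ℕ)
    (hc : ∀ j (hj : j < m), cidx j = (τ.symm ⟨j, hj⟩ : ℕ)) :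
    ((Finset.range m).filter (fun j => 2*k < cidx j)).card = m - (2*k+1) := by
  have hcard : ((Finset.range m).filter (fun j => 2*k < cidx j)).card
      = ((Finset.range m).filter (fun l => 2*k < l)).card := by
    apply Finset.card_bij (fun j _ => cidx j)
    · intro j hj
      simp only [Finset.mem_filter, Finset.mem_range] at hj ⊢
      exact ⟨by rw [hc j hj.1]; exact (τ.symm ⟨j, hj.1⟩).isLt, hj.2⟩
    · intro j1 hj1 j2 hj2 heq
      simp only [Finset.mem_filter, Finset.mem_range] at hj1 hj2
      rw [hc j1 hj1.1, hc j2 hj2.1] at heq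
      have := τ.symm.injective (Fin.val_injective heq)
      exact congrArg Fin.val this
    · intro l hl
      simp only [Finset.mem_filter, Finset.mem_range] at hl
      refine ⟨(τ ⟨l, hl.1⟩ : ℕ), ?_, ?_⟩
      · simp only [Finset.mem_filter, Finset.mem_range]
        refine ⟨(τ ⟨l, hl.1⟩).isLt, ?_⟩
        rw [hc _ (τ ⟨l, hl.1⟩).isLt]
        simp only [Fin.eta, Equiv.symm_apply_apply]
        exact hl.2
      · rw [hc _ (τ ⟨l, hl.1⟩).isLt]
        simp only [Fin.eta, Equiv.symm_apply_apply]
  rw [hcard]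
  have : (Finset.range m).filter (fun l => 2*k < l) = Finset.Ico (2*k+1) m := by
    ext l
    simp only [Finset.mem_filter, Finset.mem_range, Finset.mem_Ico]
    omega
  rw [this, Nat.card_Ico]

/-- Bound for the expectation of a product of cosines of a Lévy sheet
(Lemma on products of cosines): for points `(x_j,y_j)` in `(s₀,s₀')×(t₀,t₀')` with
`s₀' < 2s₀`, `t₀' < 2t₀`, denoting by `xs, ys` the sorted values of the `x_j` and `y_j`,
`E[∏ cos(θL(√n x_j, √n y_j))]` is bounded by the product of the two exponentials
involving `a*(θ) = min{a(θ),…,a(mθ)}` and the paired order statistics. -/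
theorem levy_sheet_product_of_cosines_bound
    {Ω : Type*} [MeasurableSpace Ω] (μ : Measure Ω) [IsProbabilityMeasure μ]
    (L : ℝ → ℝ → Ω → ℝ) (a b : ℝ → ℝ) (Ψ : ℝ → ℂ)
    (hLmeas : Measurable fun q : ℝ × ℝ × Ω => L q.1 q.2.1 q.2.2)
    (hΨ : ∀ ξ, Ψ ξ = (a ξ : ℂ) + (b ξ : ℂ) * Complex.I)
    (ha : ∀ ξ, 0 ≤ a ξ)
    (hzero : ∀ x y ω, L x 0 ω = 0 ∧ L 0 y ω = 0)
    -- Lévy sheet: joint characteristic function of increments over pairwise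
    -- disjoint rectangles (encodes independence and the Lévy–Khintchine formula)
    (hchar : ∀ (k : ℕ) (s t s' t' ξ : ℕ → ℝ),
      (∀ j, j < k → 0 ≤ s j ∧ s j ≤ s' j ∧ 0 ≤ t j ∧ t j ≤ t' j) →
      (∀ i j, i < k → j < k → i ≠ j →
        Disjoint (Ioc (s i) (s' i) ×ˢ Ioc (t i) (t' i))
                 (Ioc (s j) (s' j) ×ˢ Ioc (t j) (t' j))) →
      ∫ ω, Complex.exp (Complex.I *
          (∑ j ∈ Finset.range k, (ξ j : ℂ) *
            ((L (s' j) (t' j) ω - L (s' j) (t j) ω - L (s j) (t' j) ω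
               + L (s j) (t j) ω : ℝ) : ℂ))) ∂μ
        = Complex.exp (-∑ j ∈ Finset.range k,
            (((s' j - s j) * (t' j - t j) : ℝ) : ℂ) * Ψ (ξ j)))
    (m : ℕ) (hm : Even m) (hm1 : 1 ≤ m)
    (θ : ℝ) (hθ : θ ∈ Ioo (0:ℝ) (2 * Real.pi))
    (haθ : ∀ k : ℕ, 1 ≤ k → k ≤ m → a ((k : ℝ) * θ) ≠ 0)
    (s₀ s₀' t₀ t₀' : ℝ)
    (hs : 0 < s₀) (hs' : s₀ < s₀') (hs2 : s₀' < 2 * s₀)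
    (ht : 0 < t₀) (ht' : t₀ < t₀') (ht2 : t₀' < 2 * t₀)
    (n : ℕ)
    (x y : ℕ → ℝ)
    (hxy : ∀ j, j < m → s₀ < x j ∧ x j < s₀' ∧ t₀ < y j ∧ y j < t₀')
    -- `xs`, `ys` : the values `x_j`, `y_j` sorted in increasing order
    (σ τ : Equiv.Perm (Fin m)) (xs ys : ℕ → ℝ)
    (hxs : ∀ j : Fin m, xs j = x (σ j)) (hys : ∀ j : Fin m, ys j = y (τ j))
    (hxsmono : ∀ i j, i ≤ j → j < m → xs i ≤ xs j)
    (hysmono : ∀ i j, i ≤ j → j < m → ys i ≤ ys j) :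
    ∫ ω, (∏ j ∈ Finset.range m,
        Real.cos (θ * L (Real.sqrt n * x j) (Real.sqrt n * y j) ω)) ∂μ
      ≤ Real.exp (-(n / 2) * ((Finset.Icc 1 m).inf' (Finset.nonempty_Icc.mpr hm1)
            fun k => a ((k : ℝ) * θ)) *
          ∑ k ∈ Finset.range (m / 2), xs (2 * k) * (ys (2 * k + 1) - ys (2 * k)))
        * Real.exp (-(n / 2) * ((Finset.Icc 1 m).inf' (Finset.nonempty_Icc.mpr hm1)
            fun k => a ((k : ℝ) * θ)) *
          ∑ k ∈ Finset.range (m / 2), ys (2 * k) * (xs (2 * k + 1) - xs (2 * k))) := by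

  classical
  have hmeven := hm
  set astar : ℝ := (Finset.Icc 1 m).inf' (Finset.nonempty_Icc.mpr hm1)
    (fun k => a ((k : ℝ) * θ)) with hastar
  set S : ℝ := Real.sqrt n with hSdef
  have hS0 : 0 ≤ S := Real.sqrt_nonneg _
  have hSS : S * S = (n:ℝ) := Real.mul_self_sqrt (Nat.cast_nonneg n)
  obtain ⟨mhalf, hmhalf⟩ := hm
  set M : ℕ := m / 2 with hMdef
  have hm2 : 2 * M = m := by omega
  have hM1 : 1 ≤ M := by omega
  set P : ℕ := M + m with hPdef
  have hP0 : 0 < P := by omega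
  have hxsb : ∀ j, j < m → s₀ < xs j ∧ xs j < s₀' := by
    intro j hj
    rw [show xs j = xs ((⟨j, hj⟩ : Fin m) : ℕ) from rfl, hxs ⟨j, hj⟩]
    exact ⟨(hxy _ (σ ⟨j, hj⟩).isLt).1, (hxy _ (σ ⟨j, hj⟩).isLt).2.1⟩
  have hysb : ∀ j, j < m → t₀ < ys j ∧ ys j < t₀' := by
    intro j hj
    rw [show ys j = ys ((⟨j, hj⟩ : Fin m) : ℕ) from rfl, hys ⟨j, hj⟩]
    exact ⟨(hxy _ (τ ⟨j, hj⟩).isLt).2.2.1, (hxy _ (τ ⟨j, hj⟩).isLt).2.2.2⟩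
  have hxs0pos : 0 < xs 0 := lt_trans hs (hxsb 0 (by omega)).1
  have hys0pos : 0 < ys 0 := lt_trans ht (hysb 0 (by omega)).1
  -- symmetry of a
  have hone : ∀ w : ℝ, ∫ ω, Complex.exp (Complex.I * ((w:ℂ) * ((L 1 1 ω : ℝ) : ℂ))) ∂μ
      = Complex.exp (-Ψ w) := by
    intro w
    have h := hchar 1 (fun _ => 0) (fun _ => 0) (fun _ => 1) (fun _ => 1) (fun _ => w)
      (by intro j _; norm_num) (by intro i j hi hj hij; omega)
    simp only [Finset.sum_range_one] at h
    have hfun : (fun ω => Complex.exp (Complex.I * ((w:ℂ) *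
        ((L 1 1 ω - L 1 0 ω - L 0 1 ω + L 0 0 ω : ℝ) : ℂ))))
        = fun ω => Complex.exp (Complex.I * ((w:ℂ) * ((L 1 1 ω : ℝ) : ℂ))) := by
      funext ω
      rw [(hzero 1 1 ω).1, (hzero 1 1 ω).2, (hzero 0 0 ω).1]
      norm_num
    rw [hfun] at h
    rw [h]
    norm_num
  have hre : ∀ z : ℝ, (Ψ z).re = a z := by
    intro z; rw [hΨ]; simp
  have hsym : ∀ w : ℝ, a (-w) = a w := by
    intro w
    have h1 := hone w
    have h2 := hone (-w)
    have hconj : ∫ ω, Complex.exp (Complex.I * (((-w : ℝ):ℂ) * ((L 1 1 ω : ℝ) : ℂ))) ∂μ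
        = (starRingEnd ℂ) (Complex.exp (-Ψ w)) := by
      rw [← h1, ← integral_conj]
      congr 1; funext ω
      rw [← Complex.exp_conj]
      congr 1
      simp only [map_mul, Complex.conj_I, Complex.conj_ofReal, Complex.ofReal_neg]
      ring
    rw [h2] at hconj
    have habs := congrArg (‖·‖) hconj
    rw [Complex.norm_conj, Complex.norm_exp, Complex.norm_exp, Real.exp_eq_exp] at habs
    simp only [Complex.neg_re, hre, neg_inj] at habs
    exact habs
  -- facts about astar
  have hastar0 : 0 ≤ astar := Finset.le_inf' _ _ (fun k _ => ha _)
  have hastar_le : ∀ Z : ℤ, Z ≠ 0 → Z.natAbs ≤ m → astar ≤ a (θ * (Z:ℝ)) := by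
    intro Z hZ0 hZm
    have h1 : Z.natAbs ∈ Finset.Icc 1 m := Finset.mem_Icc.mpr ⟨Int.natAbs_pos.mpr hZ0, hZm⟩
    have h2 : astar ≤ a ((Z.natAbs : ℝ) * θ) := by
      rw [hastar]; exact Finset.inf'_le _ h1
    rcases le_or_gt 0 Z with hsgn | hsgn
    · have hcast : ((Z.natAbs : ℕ) : ℝ) = (Z:ℝ) := by
        rw [Nat.cast_natAbs, abs_of_nonneg hsgn]
      have harg : (Z.natAbs : ℝ) * θ = θ * (Z:ℝ) := by rw [hcast]; ring
      rwa [harg] at h2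
    · have hcast : ((Z.natAbs : ℕ) : ℝ) = -(Z:ℝ) := by
        rw [Nat.cast_natAbs, abs_of_neg hsgn, Int.cast_neg]
      have harg : (Z.natAbs : ℝ) * θ = -(θ * (Z:ℝ)) := by rw [hcast]; ring
      rw [harg, hsym] at h2
      exact h2
  -- the grid
  set u : ℕ → ℝ := fun i => if i = 0 then 0 else if i ≤ M then S * xs (2*(i-1)) / 2
    else S * xs (i - (M+1)) with hudef
  set v : ℕ → ℝ := fun i => if i = 0 then 0 else if i ≤ M then S * ys (2*(i-1)) / 2
    else S * ys (i - (M+1)) with hvdef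
  have hu0 : u 0 = 0 := by simp [hudef]
  have hv0 : v 0 = 0 := by simp [hvdef]
  have huval : ∀ i, i < m → u (M+1+i) = S * xs i := by
    intro i hi
    simp only [hudef]
    rw [if_neg (by omega), if_neg (by omega)]
    have h3 : M+1+i-(M+1) = i := by omega
    rw [h3]
  have hvval : ∀ i, i < m → v (M+1+i) = S * ys i := by
    intro i hi
    simp only [hvdef]
    rw [if_neg (by omega), if_neg (by omega)]
    have h3 : M+1+i-(M+1) = i := by omega
    rw [h3]
  have hustep : ∀ i, i < P → u i ≤ u (i+1) := by
    intro i hiP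
    simp only [hudef]
    by_cases h0 : i = 0
    · subst h0
      rw [if_pos rfl, if_neg (by omega : ¬ (0+1 = 0)), if_pos (by omega : 0+1 ≤ M)]
      rw [show 2*(0+1-1) = 0 from rfl]
      have := mul_nonneg hS0 (le_of_lt hxs0pos)
      linarith
    · by_cases hiM : i + 1 ≤ M
      · rw [if_neg h0, if_pos (by omega), if_neg (by omega), if_pos hiM]
        have hmono := hxsmono (2*(i-1)) (2*(i+1-1)) (by omega) (by omega)
        have := mul_le_mul_of_nonneg_left hmono hS0
        linarith
      · by_cases hiM2 : i ≤ M
        · rw [if_neg h0, if_pos hiM2, if_neg (by omega), if_neg (by omega)]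
          rw [show i+1-(M+1) = 0 from by omega]
          have e1 := (hxsb (2*(i-1)) (by omega)).2
          have e2 := (hxsb 0 (by omega)).1
          have h2k : xs (2*(i-1)) ≤ 2 * xs 0 := by linarith
          have := mul_le_mul_of_nonneg_left h2k hS0
          linarith
        · rw [if_neg h0, if_neg hiM2, if_neg (by omega), if_neg (by omega)]
          have hmono := hxsmono (i-(M+1)) (i+1-(M+1)) (by omega) (by omega)
          exact mul_le_mul_of_nonneg_left hmono hS0
  have hvstep : ∀ i, i < P → v i ≤ v (i+1) := by
    intro i hiP
    simp only [hvdef]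
    by_cases h0 : i = 0
    · subst h0
      rw [if_pos rfl, if_neg (by omega : ¬ (0+1 = 0)), if_pos (by omega : 0+1 ≤ M)]
      rw [show 2*(0+1-1) = 0 from rfl]
      have := mul_nonneg hS0 (le_of_lt hys0pos)
      linarith
    · by_cases hiM : i + 1 ≤ M
      · rw [if_neg h0, if_pos (by omega), if_neg (by omega), if_pos hiM]
        have hmono := hysmono (2*(i-1)) (2*(i+1-1)) (by omega) (by omega)
        have := mul_le_mul_of_nonneg_left hmono hS0
        linarith
      · by_cases hiM2 : i ≤ M
        · rw [if_neg h0, if_pos hiM2, if_neg (by omega), if_neg (by omega)]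
          rw [show i+1-(M+1) = 0 from by omega]
          have e1 := (hysb (2*(i-1)) (by omega)).2
          have e2 := (hysb 0 (by omega)).1
          have h2k : ys (2*(i-1)) ≤ 2 * ys 0 := by linarith
          have := mul_le_mul_of_nonneg_left h2k hS0
          linarith
        · rw [if_neg h0, if_neg hiM2, if_neg (by omega), if_neg (by omega)]
          have hmono := hysmono (i-(M+1)) (i+1-(M+1)) (by omega) (by omega)
          exact mul_le_mul_of_nonneg_left hmono hS0
  have humono : ∀ i j, i ≤ j → j ≤ P → u i ≤ u j := aux_mono u P hustep
  have hvmono : ∀ i j, i ≤ j → j ≤ P → v i ≤ v j := aux_mono v P hvstep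
  have huM1 : u (M+1) = S * xs 0 := by
    have := huval 0 (by omega); simpa using this
  have hvM1 : v (M+1) = S * ys 0 := by
    have := hvval 0 (by omega); simpa using this
  -- the index maps
  set r : ℕ → ℕ := fun j => if h : j < m then M + 1 + ((σ.symm ⟨j, h⟩ : Fin m) : ℕ) else 0
    with hrdef
  set c : ℕ → ℕ := fun j => if h : j < m then M + 1 + ((τ.symm ⟨j, h⟩ : Fin m) : ℕ) else 0
    with hcdef
  have hrprop : ∀ j, j < m → M+1 ≤ r j ∧ r j ≤ P ∧ u (r j) = S * x j := by
    intro j hj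
    have hrj : r j = M + 1 + ((σ.symm ⟨j, hj⟩ : Fin m) : ℕ) := by
      simp only [hrdef]; rw [dif_pos hj]
    have hlt := (σ.symm ⟨j, hj⟩).isLt
    refine ⟨by omega, by omega, ?_⟩
    rw [hrj, huval _ hlt]
    have h4 : xs ((σ.symm ⟨j, hj⟩ : Fin m) : ℕ) = x j := by
      rw [hxs (σ.symm ⟨j, hj⟩), Equiv.apply_symm_apply]
    rw [h4]
  have hcprop : ∀ j, j < m → M+1 ≤ c j ∧ c j ≤ P ∧ v (c j) = S * y j := by
    intro j hj
    have hcj : c j = M + 1 + ((τ.symm ⟨j, hj⟩ : Fin m) : ℕ) := by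
      simp only [hcdef]; rw [dif_pos hj]
    have hlt := (τ.symm ⟨j, hj⟩).isLt
    refine ⟨by omega, by omega, ?_⟩
    rw [hcj, hvval _ hlt]
    have h4 : ys ((τ.symm ⟨j, hj⟩ : Fin m) : ℕ) = y j := by
      rw [hys (τ.symm ⟨j, hj⟩), Equiv.apply_symm_apply]
    rw [h4]
  -- the coefficients
  set C : Finset ℕ → ℕ → ℕ → ℤ := fun T i i' => ∑ j ∈ Finset.range m,
    if i < r j ∧ i' < c j then (if j ∈ T then (1:ℤ) else -1) else 0 with hCdef
  have hCcast : ∀ (T : Finset ℕ) i i', ((C T i i' : ℤ) : ℝ)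
      = ∑ j ∈ Finset.range m,
        (if i < r j ∧ i' < c j then (if j ∈ T then (1:ℝ) else -1) else 0) := by
    intro T i i'
    simp only [hCdef]
    rw [Int.cast_sum]
    apply Finset.sum_congr rfl
    intro j _
    split_ifs <;> simp
  -- odd-coefficient cells
  have hCa_h : ∀ (T : Finset ℕ) i k, i < M+1 → k < M →
      astar ≤ a (θ * ((C T i (M+1+2*k) : ℤ) : ℝ)) := by
    intro T i k hi hk
    have hcidx : ∀ j (hj : j < m), c j - (M+1) = ((τ.symm ⟨j, hj⟩ : Fin m) : ℕ) := by
      intro j hj; simp only [hcdef]; rw [dif_pos hj]; omega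
    have hCeq : C T i (M+1+2*k) = ∑ j ∈ Finset.range m,
        if 2*k < c j - (M+1) then (if j ∈ T then (1:ℤ) else -1) else 0 := by
      simp only [hCdef]
      apply Finset.sum_congr rfl
      intro j hj
      have hjm := Finset.mem_range.mp hj
      have h1 : r j = M + 1 + ((σ.symm ⟨j, hjm⟩ : Fin m) : ℕ) := by
        simp only [hrdef]; rw [dif_pos hjm]
      have h2 : c j = M + 1 + ((τ.symm ⟨j, hjm⟩ : Fin m) : ℕ) := by
        simp only [hcdef]; rw [dif_pos hjm]
      refine if_congr ?_ rfl rfl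
      rw [h1, h2]
      constructor
      · intro hcc; omega
      · intro hcc; omega
    have hcard := count_perm m k τ (fun j => c j - (M+1)) hcidx
    have hodd : Odd (((Finset.range m).filter (fun j => 2*k < c j - (M+1))).card) := by
      rw [hcard]
      exact Nat.Even.sub_odd (by omega) hmeven ⟨k, by ring⟩
    obtain ⟨hne, hle⟩ := aux_parity m T (fun j => 2*k < c j - (M+1)) hodd
    rw [hCeq]
    exact hastar_le _ hne hle
  have hCa_v : ∀ (T : Finset ℕ) k i', i' < M+1 → k < M →
      astar ≤ a (θ * ((C T (M+1+2*k) i' : ℤ) : ℝ)) := by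
    intro T k i' hi hk
    have hridx : ∀ j (hj : j < m), r j - (M+1) = ((σ.symm ⟨j, hj⟩ : Fin m) : ℕ) := by
      intro j hj; simp only [hrdef]; rw [dif_pos hj]; omega
    have hCeq : C T (M+1+2*k) i' = ∑ j ∈ Finset.range m,
        if 2*k < r j - (M+1) then (if j ∈ T then (1:ℤ) else -1) else 0 := by
      simp only [hCdef]
      apply Finset.sum_congr rfl
      intro j hj
      have hjm := Finset.mem_range.mp hj
      have h1 : r j = M + 1 + ((σ.symm ⟨j, hjm⟩ : Fin m) : ℕ) := by
        simp only [hrdef]; rw [dif_pos hjm]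
      have h2 : c j = M + 1 + ((τ.symm ⟨j, hjm⟩ : Fin m) : ℕ) := by
        simp only [hcdef]; rw [dif_pos hjm]
      refine if_congr ?_ rfl rfl
      rw [h1, h2]
      constructor
      · intro hcc; omega
      · intro hcc; omega
    have hcard := count_perm m k σ (fun j => r j - (M+1)) hridx
    have hodd : Odd (((Finset.range m).filter (fun j => 2*k < r j - (M+1))).card) := by
      rw [hcard]
      exact Nat.Even.sub_odd (by omega) hmeven ⟨k, by ring⟩
    obtain ⟨hne, hle⟩ := aux_parity m T (fun j => 2*k < r j - (M+1)) hodd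
    rw [hCeq]
    exact hastar_le _ hne hle
  -- measurability
  have hLm : ∀ (p q : ℝ), Measurable (fun ω => L p q ω) := by
    intro p q
    exact hLmeas.comp (measurable_const.prodMk (measurable_const.prodMk measurable_id))
  have hwmeas : ∀ T : Finset ℕ, Measurable (fun ω => (θ * ∑ j ∈ Finset.range m, (if j ∈ T then (1:ℝ) else -1) * L (S * x j) (S * y j) ω)) := by
    intro T
    apply Measurable.const_mul
    apply Finset.measurable_sum
    intro j _
    exact (hLm _ _).const_mul _
  have hint : ∀ T : Finset ℕ, Integrable (fun ω => Complex.exp (Complex.I * (((θ * ∑ j ∈ Finset.range m, (if j ∈ T then (1:ℝ) else -1) * L (S * x j) (S * y j) ω) : ℝ) : ℂ))) μ := by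
    intro T
    refine (integrable_const (1:ℝ)).mono' ?_ ?_
    · exact (Complex.continuous_exp.measurable.comp
        ((Complex.measurable_ofReal.comp (hwmeas T)).const_mul Complex.I)).aestronglyMeasurable
    · filter_upwards with ω
      rw [Complex.norm_exp]
      simp [Complex.mul_re]
  -- the characteristic-function identity for each sign pattern
  have hcharT : ∀ T : Finset ℕ,
      (∫ ω, Complex.exp (Complex.I * (((θ * ∑ j ∈ Finset.range m, (if j ∈ T then (1:ℝ) else -1) * L (S * x j) (S * y j) ω) : ℝ) : ℂ)) ∂μ) = Complex.exp (-∑ e ∈ Finset.range (P*P), ((((u (e / P + 1) - u (e / P)) * (v (e % P + 1) - v (e % P))) : ℝ) : ℂ) * Ψ (θ * ((C T (e / P) (e % P) : ℤ) : ℝ))) := by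
    intro T
    have hb : ∀ e, e < P*P → 0 ≤ u (e / P) ∧ u (e / P) ≤ u (e / P + 1)
        ∧ 0 ≤ v (e % P) ∧ v (e % P) ≤ v (e % P + 1) := by
      intro e he
      have h1 : e / P < P := (Nat.div_lt_iff_lt_mul hP0).mpr he
      have h2 : e % P < P := Nat.mod_lt _ hP0
      refine ⟨?_, humono (e / P) (e / P + 1) (Nat.le_succ _) h1, ?_,
        hvmono (e % P) (e % P + 1) (Nat.le_succ _) h2⟩
      · rw [← hu0]; exact humono 0 (e / P) (Nat.zero_le _) (le_of_lt h1)
      · rw [← hv0]; exact hvmono 0 (e % P) (Nat.zero_le _) (le_of_lt h2)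
    have hkey : ∀ (g : ℕ → ℝ), (∀ i j, i ≤ j → j ≤ P → g i ≤ g j) → ∀ (i j : ℕ), i < j → j < P →
        Disjoint (Ioc (g i) (g (i+1))) (Ioc (g j) (g (j+1))) := by
      intro g hg i j hij hj
      rw [Set.Ioc_disjoint_Ioc]
      have h3 : g (i+1) ≤ g j := hg _ _ (by omega) (by omega)
      exact le_trans inf_le_left (le_trans h3 le_sup_right)
    have hd : ∀ e f, e < P*P → f < P*P → e ≠ f →
        Disjoint (Ioc (u (e / P)) (u (e / P + 1)) ×ˢ Ioc (v (e % P)) (v (e % P + 1)))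
                 (Ioc (u (f / P)) (u (f / P + 1)) ×ˢ Ioc (v (f % P)) (v (f % P + 1))) := by
      intro e f he hf hef
      have hde : e / P < P := (Nat.div_lt_iff_lt_mul hP0).mpr he
      have hdf : f / P < P := (Nat.div_lt_iff_lt_mul hP0).mpr hf
      have hme : e % P < P := Nat.mod_lt _ hP0
      have hmf : f % P < P := Nat.mod_lt _ hP0
      rcases lt_trichotomy (e / P) (f / P) with h3 | h3 | h3
      · exact Set.disjoint_prod.mpr (Or.inl (hkey u humono _ _ h3 hdf))
      · have hne : e % P ≠ f % P := by
          intro hmod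
          apply hef
          have h6 : e = P * (e / P) + e % P := (Nat.div_add_mod e P).symm
          rw [h6, h3, hmod, Nat.div_add_mod]
        rcases lt_or_gt_of_ne hne with h' | h'
        · exact Set.disjoint_prod.mpr (Or.inr (hkey v hvmono _ _ h' hmf))
        · exact (Set.disjoint_prod.mpr (Or.inr (hkey v hvmono _ _ h' hme))).symm
      · exact (Set.disjoint_prod.mpr (Or.inl (hkey u humono _ _ h3 hde))).symm
    have h := hchar (P*P) (fun e => u (e / P)) (fun e => v (e % P)) (fun e => u (e / P + 1))
      (fun e => v (e % P + 1)) (fun e => θ * ((C T (e / P) (e % P) : ℤ) : ℝ))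
      (fun e he => ⟨(hb e he).1, (hb e he).2.1, (hb e he).2.2.1, (hb e he).2.2.2⟩) hd
    rw [← h]
    congr 1
    funext ω
    congr 1
    congr 1
    -- the real-valued rearrangement identity
    have hid : (θ * ∑ j ∈ Finset.range m, (if j ∈ T then (1:ℝ) else -1) * L (S * x j) (S * y j) ω)
        = ∑ i ∈ Finset.range P, ∑ i' ∈ Finset.range P,
          (θ * ((C T i i' : ℤ) : ℝ)) * (L (u (i+1)) (v (i'+1)) ω - L (u (i+1)) (v i') ω - L (u i) (v (i'+1)) ω + L (u i) (v i') ω) := by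
      have hinner : ∀ j, j < m →
          (∑ i ∈ Finset.range P, ∑ i' ∈ Finset.range P,
            (if i < r j ∧ i' < c j then (if j ∈ T then (1:ℝ) else -1) * (θ * (L (u (i+1)) (v (i'+1)) ω - L (u (i+1)) (v i') ω - L (u i) (v (i'+1)) ω + L (u i) (v i') ω)) else 0))
          = θ * ((if j ∈ T then (1:ℝ) else -1) * L (S * x j) (S * y j) ω) := by
        intro j hj
        have hrj := hrprop j hj
        have hcj := hcprop j hj
        have hsplit : ∀ i, (∑ i' ∈ Finset.range P,
            if i < r j ∧ i' < c j then (if j ∈ T then (1:ℝ) else -1) * (θ * (L (u (i+1)) (v (i'+1)) ω - L (u (i+1)) (v i') ω - L (u i) (v (i'+1)) ω + L (u i) (v i') ω)) else 0)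
            = (if i < r j then (∑ i' ∈ Finset.range (c j),
                (if j ∈ T then (1:ℝ) else -1) * (θ * (L (u (i+1)) (v (i'+1)) ω - L (u (i+1)) (v i') ω - L (u i) (v (i'+1)) ω + L (u i) (v i') ω))) else 0) := by
          intro i
          by_cases hi : i < r j
          · simp only [hi, true_and, if_true]
            exact aux_ite _ (c j) P hcj.2.1
          · simp [hi]
        rw [Finset.sum_congr rfl (fun i _ => hsplit i), aux_ite _ (r j) P hrj.2.1]
        have hpull : (∑ i ∈ Finset.range (r j), ∑ i' ∈ Finset.range (c j),
            (if j ∈ T then (1:ℝ) else -1) * (θ * (L (u (i+1)) (v (i'+1)) ω - L (u (i+1)) (v i') ω - L (u i) (v (i'+1)) ω + L (u i) (v i') ω)))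
            = (if j ∈ T then (1:ℝ) else -1) * (θ * ∑ i ∈ Finset.range (r j), ∑ i' ∈ Finset.range (c j),
              (L (u (i+1)) (v (i'+1)) ω - L (u (i+1)) (v i') ω - L (u i) (v (i'+1)) ω + L (u i) (v i') ω)) := by
          simp only [Finset.mul_sum]
        rw [hpull, aux_tel (fun p q => L p q ω) u v hu0 hv0 (fun p => (hzero p 0 ω).1)
          (fun q => (hzero 0 q ω).2) (r j) (c j), hrj.2.2, hcj.2.2]
        ring
      calc θ * ∑ j ∈ Finset.range m, (if j ∈ T then (1:ℝ) else -1) * L (S * x j) (S * y j) ω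
          = ∑ j ∈ Finset.range m, θ * ((if j ∈ T then (1:ℝ) else -1) * L (S * x j) (S * y j) ω) := Finset.mul_sum _ _ _
        _ = ∑ j ∈ Finset.range m, ∑ i ∈ Finset.range P, ∑ i' ∈ Finset.range P,
              (if i < r j ∧ i' < c j then (if j ∈ T then (1:ℝ) else -1) * (θ * (L (u (i+1)) (v (i'+1)) ω - L (u (i+1)) (v i') ω - L (u i) (v (i'+1)) ω + L (u i) (v i') ω)) else 0) :=
            Finset.sum_congr rfl (fun j hj => (hinner j (Finset.mem_range.mp hj)).symm)
        _ = ∑ i ∈ Finset.range P, ∑ i' ∈ Finset.range P, ∑ j ∈ Finset.range m,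
              (if i < r j ∧ i' < c j then (if j ∈ T then (1:ℝ) else -1) * (θ * (L (u (i+1)) (v (i'+1)) ω - L (u (i+1)) (v i') ω - L (u i) (v (i'+1)) ω + L (u i) (v i') ω)) else 0) := by
            rw [Finset.sum_comm]
            exact Finset.sum_congr rfl (fun i _ => Finset.sum_comm)
        _ = ∑ i ∈ Finset.range P, ∑ i' ∈ Finset.range P,
              (θ * ((C T i i' : ℤ) : ℝ)) * (L (u (i+1)) (v (i'+1)) ω - L (u (i+1)) (v i') ω - L (u i) (v (i'+1)) ω + L (u i) (v i') ω) := by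
            apply Finset.sum_congr rfl; intro i _
            apply Finset.sum_congr rfl; intro i' _
            rw [hCcast T i i', Finset.mul_sum, Finset.sum_mul]
            apply Finset.sum_congr rfl; intro j _
            split_ifs <;> ring
    rw [aux_grid P P hP0 (fun i i' => ((θ * ((C T i i' : ℤ) : ℝ) : ℝ) : ℂ)
      * (((L (u (i+1)) (v (i'+1)) ω - L (u (i+1)) (v i') ω - L (u i) (v (i'+1)) ω + L (u i) (v i') ω) : ℝ) : ℂ))]
    rw [hid, Complex.ofReal_sum]
    apply Finset.sum_congr rfl
    intro i _
    rw [Complex.ofReal_sum]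
    apply Finset.sum_congr rfl
    intro i' _
    push_cast
    ring
  -- the modulus bound via the strip areas
  have hbound : ∀ T : Finset ℕ, ‖(Complex.exp (-∑ e ∈ Finset.range (P*P), ((((u (e / P + 1) - u (e / P)) * (v (e % P + 1) - v (e % P))) : ℝ) : ℂ) * Ψ (θ * ((C T (e / P) (e % P) : ℤ) : ℝ))))‖ ≤ Real.exp (-(astar * (((n:ℝ)/2) * (∑ k ∈ Finset.range M, xs (2*k) * (ys (2*k+1) - ys (2*k))) + ((n:ℝ)/2) * (∑ k ∈ Finset.range M, ys (2*k) * (xs (2*k+1) - xs (2*k)))))) := by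
    intro T
    rw [Complex.norm_exp]
    apply Real.exp_le_exp.mpr
    have hre2 : (-∑ e ∈ Finset.range (P*P), ((((u (e / P + 1) - u (e / P)) * (v (e % P + 1) - v (e % P))) : ℝ) : ℂ) * Ψ (θ * ((C T (e / P) (e % P) : ℤ) : ℝ))).re
        = -∑ e ∈ Finset.range (P*P), ((u (e / P + 1) - u (e / P)) * (v (e % P + 1) - v (e % P))) * a (θ * ((C T (e / P) (e % P) : ℤ) : ℝ)) := by
      rw [Complex.neg_re, Complex.re_sum]
      congr 1
      apply Finset.sum_congr rfl
      intro e _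
      rw [hΨ]
      simp [Complex.mul_re]
    rw [hre2]
    apply neg_le_neg
    rw [aux_grid P P hP0 (fun i i' => ((u (i+1) - u i) * (v (i'+1) - v i'))
      * a (θ * ((C T i i' : ℤ) : ℝ)))]
    rw [← Finset.sum_product' (Finset.range P) (Finset.range P) (fun i i' =>
      ((u (i+1) - u i) * (v (i'+1) - v i')) * a (θ * ((C T i i' : ℤ) : ℝ)))]
    have hinj : ∀ x' ∈ Finset.range M, ∀ y' ∈ Finset.range M, M+1+2*x' = M+1+2*y' → x' = y' :=
      fun x' _ y' _ h5 => by omega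
    have hsub : ((Finset.range (M+1)) ×ˢ ((Finset.range M).image (fun k => M+1+2*k))) ∪
        (((Finset.range M).image (fun k => M+1+2*k)) ×ˢ (Finset.range (M+1)))
        ⊆ (Finset.range P) ×ˢ (Finset.range P) := by
      intro p hp
      simp only [Finset.mem_union, Finset.mem_product, Finset.mem_range,
        Finset.mem_image] at hp ⊢
      rcases hp with ⟨h1, ⟨k, hk, hk2⟩⟩ | ⟨⟨k, hk, hk2⟩, h1⟩ <;> omega
    have hdisjAB : Disjoint ((Finset.range (M+1)) ×ˢ ((Finset.range M).image (fun k => M+1+2*k)))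
        (((Finset.range M).image (fun k => M+1+2*k)) ×ˢ (Finset.range (M+1))) := by
      rw [Finset.disjoint_left]
      intro p hpA hpB
      simp only [Finset.mem_product, Finset.mem_range, Finset.mem_image] at hpA hpB
      obtain ⟨h1, -⟩ := hpA
      obtain ⟨⟨k, hk, hk2⟩, -⟩ := hpB
      omega
    refine le_trans ?_ (Finset.sum_le_sum_of_subset_of_nonneg hsub ?_)
    swap
    · intro p hp _
      simp only [Finset.mem_product, Finset.mem_range] at hp
      have h1 := hustep p.1 hp.1
      have h2 := hvstep p.2 hp.2
      exact mul_nonneg (mul_nonneg (by linarith) (by linarith)) (ha _)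
    rw [Finset.sum_union hdisjAB]
    have hA : astar * (((n:ℝ)/2) * (∑ k ∈ Finset.range M, xs (2*k) * (ys (2*k+1) - ys (2*k))))
        ≤ ∑ p ∈ (Finset.range (M+1)) ×ˢ ((Finset.range M).image (fun k => M+1+2*k)),
          ((u (p.1+1) - u p.1) * (v (p.2+1) - v p.2)) * a (θ * ((C T p.1 p.2 : ℤ) : ℝ)) := by
      rw [Finset.sum_product' (Finset.range (M+1)) ((Finset.range M).image (fun k => M+1+2*k))
        (fun i i' => ((u (i+1) - u i) * (v (i'+1) - v i')) * a (θ * ((C T i i' : ℤ) : ℝ)))]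
      rw [Finset.sum_congr rfl (fun i _ => Finset.sum_image hinj), Finset.sum_comm]
      rw [show astar * (((n:ℝ)/2) * (∑ k ∈ Finset.range M, xs (2*k) * (ys (2*k+1) - ys (2*k))))
          = ∑ k ∈ Finset.range M, astar * (((n:ℝ)/2) * (xs (2*k) * (ys (2*k+1) - ys (2*k))))
        from by rw [Finset.mul_sum, Finset.mul_sum]]
      apply Finset.sum_le_sum
      intro k hk
      have hkM := Finset.mem_range.mp hk
      have hΔv1 : v (M+1+2*k+1) = S * ys (2*k+1) := by
        rw [show M+1+2*k+1 = M+1+(2*k+1) from by omega]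
        exact hvval _ (by omega)
      have hΔv0 : v (M+1+2*k) = S * ys (2*k) := hvval _ (by omega)
      calc astar * (((n:ℝ)/2) * (xs (2*k) * (ys (2*k+1) - ys (2*k))))
          ≤ (S * xs 0) * (S * ys (2*k+1) - S * ys (2*k)) * astar := by
            have e1 := (hxsb (2*k) (by omega)).2
            have e2 := (hxsb 0 (by omega)).1
            have h2k : xs (2*k) ≤ 2 * xs 0 := by linarith
            have hΔ : 0 ≤ ys (2*k+1) - ys (2*k) := by
              have := hysmono (2*k) (2*k+1) (by omega) (by omega); linarith
            have hn0 : 0 ≤ (n:ℝ) := Nat.cast_nonneg n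
            have e3 : (S * xs 0) * (S * ys (2*k+1) - S * ys (2*k)) * astar
                = (n:ℝ) * (xs 0 * (ys (2*k+1) - ys (2*k))) * astar := by
              rw [← hSS]; ring
            rw [e3]
            have key : 0 ≤ ((n:ℝ) * (ys (2*k+1) - ys (2*k)) * astar) * (2 * xs 0 - xs (2*k)) :=
              mul_nonneg (mul_nonneg (mul_nonneg hn0 hΔ) hastar0) (by linarith)
            nlinarith [key]
        _ = ∑ i ∈ Finset.range (M+1), (u (i+1) - u i)
              * ((v (M+1+2*k+1) - v (M+1+2*k)) * astar) := by
            rw [← Finset.sum_mul, Finset.sum_range_sub u (M+1), hu0, huM1, hΔv1, hΔv0]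
            ring
        _ ≤ ∑ i ∈ Finset.range (M+1), ((u (i+1) - u i) * (v (M+1+2*k+1) - v (M+1+2*k)))
              * a (θ * ((C T i (M+1+2*k) : ℤ) : ℝ)) := by
            apply Finset.sum_le_sum
            intro i hi
            have hiM := Finset.mem_range.mp hi
            have hui : 0 ≤ u (i+1) - u i := by
              have := hustep i (by omega); linarith
            have hvi : 0 ≤ v (M+1+2*k+1) - v (M+1+2*k) := by
              have := hvstep (M+1+2*k) (by omega); linarith
            have haa := hCa_h T i k hiM hkM
            nlinarith [mul_nonneg hui hvi, haa]
    have hB : astar * (((n:ℝ)/2) * (∑ k ∈ Finset.range M, ys (2*k) * (xs (2*k+1) - xs (2*k))))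
        ≤ ∑ p ∈ ((Finset.range M).image (fun k => M+1+2*k)) ×ˢ (Finset.range (M+1)),
          ((u (p.1+1) - u p.1) * (v (p.2+1) - v p.2)) * a (θ * ((C T p.1 p.2 : ℤ) : ℝ)) := by
      rw [Finset.sum_product' ((Finset.range M).image (fun k => M+1+2*k)) (Finset.range (M+1))
        (fun i i' => ((u (i+1) - u i) * (v (i'+1) - v i')) * a (θ * ((C T i i' : ℤ) : ℝ)))]
      rw [Finset.sum_image hinj]
      rw [show astar * (((n:ℝ)/2) * (∑ k ∈ Finset.range M, ys (2*k) * (xs (2*k+1) - xs (2*k))))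
          = ∑ k ∈ Finset.range M, astar * (((n:ℝ)/2) * (ys (2*k) * (xs (2*k+1) - xs (2*k))))
        from by rw [Finset.mul_sum, Finset.mul_sum]]
      apply Finset.sum_le_sum
      intro k hk
      have hkM := Finset.mem_range.mp hk
      have hΔu1 : u (M+1+2*k+1) = S * xs (2*k+1) := by
        rw [show M+1+2*k+1 = M+1+(2*k+1) from by omega]
        exact huval _ (by omega)
      have hΔu0 : u (M+1+2*k) = S * xs (2*k) := huval _ (by omega)
      calc astar * (((n:ℝ)/2) * (ys (2*k) * (xs (2*k+1) - xs (2*k))))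
          ≤ (S * ys 0) * (S * xs (2*k+1) - S * xs (2*k)) * astar := by
            have e1 := (hysb (2*k) (by omega)).2
            have e2 := (hysb 0 (by omega)).1
            have h2k : ys (2*k) ≤ 2 * ys 0 := by linarith
            have hΔ : 0 ≤ xs (2*k+1) - xs (2*k) := by
              have := hxsmono (2*k) (2*k+1) (by omega) (by omega); linarith
            have hn0 : 0 ≤ (n:ℝ) := Nat.cast_nonneg n
            have e3 : (S * ys 0) * (S * xs (2*k+1) - S * xs (2*k)) * astar
                = (n:ℝ) * (ys 0 * (xs (2*k+1) - xs (2*k))) * astar := by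
              rw [← hSS]; ring
            rw [e3]
            have key : 0 ≤ ((n:ℝ) * (xs (2*k+1) - xs (2*k)) * astar) * (2 * ys 0 - ys (2*k)) :=
              mul_nonneg (mul_nonneg (mul_nonneg hn0 hΔ) hastar0) (by linarith)
            nlinarith [key]
        _ = ∑ i' ∈ Finset.range (M+1), (v (i'+1) - v i')
              * ((u (M+1+2*k+1) - u (M+1+2*k)) * astar) := by
            rw [← Finset.sum_mul, Finset.sum_range_sub v (M+1), hv0, hvM1, hΔu1, hΔu0]
            ring
        _ ≤ ∑ i' ∈ Finset.range (M+1), ((u (M+1+2*k+1) - u (M+1+2*k)) * (v (i'+1) - v i'))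
              * a (θ * ((C T (M+1+2*k) i' : ℤ) : ℝ)) := by
            apply Finset.sum_le_sum
            intro i' hi
            have hiM := Finset.mem_range.mp hi
            have hui : 0 ≤ u (M+1+2*k+1) - u (M+1+2*k) := by
              have := hustep (M+1+2*k) (by omega); linarith
            have hvi : 0 ≤ v (i'+1) - v i' := by
              have := hvstep i' (by omega); linarith
            have haa := hCa_v T k i' hiM hkM
            nlinarith [mul_nonneg hui hvi, haa]
    calc astar * (((n:ℝ)/2) * (∑ k ∈ Finset.range M, xs (2*k) * (ys (2*k+1) - ys (2*k))) + ((n:ℝ)/2) * (∑ k ∈ Finset.range M, ys (2*k) * (xs (2*k+1) - xs (2*k))))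
        = astar * (((n:ℝ)/2) * (∑ k ∈ Finset.range M, xs (2*k) * (ys (2*k+1) - ys (2*k)))) + astar * (((n:ℝ)/2) * (∑ k ∈ Finset.range M, ys (2*k) * (xs (2*k+1) - xs (2*k)))) := by ring
      _ ≤ _ := add_le_add hA hB
  -- expansion of the product of cosines
  have hexpand : ∀ ω, ((∏ j ∈ Finset.range m, Real.cos (θ * L (S * x j) (S * y j) ω) : ℝ) : ℂ)
      = (1/(2:ℂ)^m) * ∑ T ∈ (Finset.range m).powerset, Complex.exp (Complex.I * (((θ * ∑ j ∈ Finset.range m, (if j ∈ T then (1:ℝ) else -1) * L (S * x j) (S * y j) ω) : ℝ) : ℂ)) := by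
    intro ω
    rw [Complex.ofReal_prod]
    have hcos : ∀ j, ((Real.cos (θ * L (S * x j) (S * y j) ω) : ℝ) : ℂ)
        = (Complex.exp (((θ * L (S * x j) (S * y j) ω : ℝ) : ℂ) * Complex.I)
          + Complex.exp (-((θ * L (S * x j) (S * y j) ω : ℝ) : ℂ) * Complex.I)) / 2 := by
      intro j
      rw [Complex.ofReal_cos]
      rfl
    rw [Finset.prod_congr rfl (fun j _ => hcos j), Finset.prod_div_distrib,
      Finset.prod_const, Finset.card_range, Finset.prod_add, div_eq_mul_inv, mul_comm,
      ← one_div]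
    congr 1
    apply Finset.sum_congr rfl
    intro T hT
    have hTsub := Finset.mem_powerset.mp hT
    rw [← Complex.exp_sum, ← Complex.exp_sum, ← Complex.exp_add]
    congr 1
    have hw : (θ * ∑ j ∈ Finset.range m, (if j ∈ T then (1:ℝ) else -1) * L (S * x j) (S * y j) ω)
        = (∑ j ∈ T, θ * L (S * x j) (S * y j) ω) - ∑ j ∈ Finset.range m \ T, θ * L (S * x j) (S * y j) ω := by
      rw [Finset.mul_sum, ← Finset.sum_sdiff hTsub]
      have e1 : ∑ j ∈ T, θ * ((if j ∈ T then (1:ℝ) else -1) * L (S * x j) (S * y j) ω) = ∑ j ∈ T, θ * L (S * x j) (S * y j) ω :=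
        Finset.sum_congr rfl (fun j hj => by rw [if_pos hj]; ring)
      have e2 : ∑ j ∈ Finset.range m \ T, θ * ((if j ∈ T then (1:ℝ) else -1) * L (S * x j) (S * y j) ω)
          = ∑ j ∈ Finset.range m \ T, -(θ * L (S * x j) (S * y j) ω) :=
        Finset.sum_congr rfl (fun j hj => by rw [if_neg (Finset.mem_sdiff.mp hj).2]; ring)
      rw [e1, e2, Finset.sum_neg_distrib]
      ring
    rw [hw, ← Finset.sum_mul, ← Finset.sum_mul]
    push_cast
    rw [Finset.sum_neg_distrib]
    ring
  -- assembly
  have hcoe : (∫ ω, ((∏ j ∈ Finset.range m, Real.cos (θ * L (S * x j) (S * y j) ω) : ℝ) : ℂ) ∂μ)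
      = ((∫ ω, (∏ j ∈ Finset.range m, Real.cos (θ * L (S * x j) (S * y j) ω)) ∂μ : ℝ) : ℂ) :=
    integral_ofReal
  have hgoal1 : (∫ ω, (∏ j ∈ Finset.range m, Real.cos (θ * L (S * x j) (S * y j) ω)) ∂μ)
      = (∫ ω, ((∏ j ∈ Finset.range m, Real.cos (θ * L (S * x j) (S * y j) ω) : ℝ) : ℂ) ∂μ).re := by
    rw [hcoe, Complex.ofReal_re]
  rw [hgoal1]
  rw [show (fun ω => ((∏ j ∈ Finset.range m, Real.cos (θ * L (S * x j) (S * y j) ω) : ℝ) : ℂ))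
      = fun ω => (1/(2:ℂ)^m) * ∑ T ∈ (Finset.range m).powerset, Complex.exp (Complex.I * (((θ * ∑ j ∈ Finset.range m, (if j ∈ T then (1:ℝ) else -1) * L (S * x j) (S * y j) ω) : ℝ) : ℂ))
    from funext hexpand]
  rw [MeasureTheory.integral_const_mul, MeasureTheory.integral_finset_sum _ (fun T _ => hint T)]
  rw [Finset.sum_congr rfl (fun T _ => hcharT T)]
  refine le_trans (Complex.re_le_norm _) ?_
  rw [norm_mul]
  have habs1 : ‖(1/(2:ℂ)^m)‖ = 1/(2:ℝ)^m := by
    rw [norm_div, norm_one, norm_pow, Complex.norm_two]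
  rw [habs1]
  have h3 : ‖(∑ T ∈ (Finset.range m).powerset, Complex.exp (-∑ e ∈ Finset.range (P*P), ((((u (e / P + 1) - u (e / P)) * (v (e % P + 1) - v (e % P))) : ℝ) : ℂ) * Ψ (θ * ((C T (e / P) (e % P) : ℤ) : ℝ))))‖
      ≤ (2:ℝ)^m * (Real.exp (-(astar * (((n:ℝ)/2) * (∑ k ∈ Finset.range M, xs (2*k) * (ys (2*k+1) - ys (2*k))) + ((n:ℝ)/2) * (∑ k ∈ Finset.range M, ys (2*k) * (xs (2*k+1) - xs (2*k))))))) := by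
    refine le_trans (norm_sum_le _ _) ?_
    refine le_trans (Finset.sum_le_card_nsmul _ _ _ (fun T _ => hbound T)) ?_
    rw [Finset.card_powerset, Finset.card_range, nsmul_eq_mul]
    push_cast
    exact le_refl _
  refine le_trans (mul_le_mul_of_nonneg_left h3 (by positivity)) (le_of_eq ?_)
  rw [← Real.exp_add]
  rw [show -((n:ℝ) / 2) * astar * (∑ k ∈ Finset.range M, xs (2*k) * (ys (2*k+1) - ys (2*k))) + -((n:ℝ) / 2) * astar * (∑ k ∈ Finset.range M, ys (2*k) * (xs (2*k+1) - xs (2*k)))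
      = -(astar * (((n:ℝ)/2) * (∑ k ∈ Finset.range M, xs (2*k) * (ys (2*k+1) - ys (2*k))) + ((n:ℝ)/2) * (∑ k ∈ Finset.range M, ys (2*k) * (xs (2*k+1) - xs (2*k))))) from by ring]
  field_simp
end

section
/- The Holmgren–Riemann–Liouville kernel K(t,r) = √(2π)(t−r)^{H−1/2} 1_{[0,t]}(r), 0 < H < 1, satisfies: there exist an increasing continuous function G, ρ ∈ (0,1], M > 0, β > 0 such that ∫₀¹ (K(s',r)−K(s,r))² dr ≤ (G(s')−G(s))^ρ for all 0 ≤ s < s' ≤ 1, and ∫_{s₀}^{s₀'} (K(s',r)−K(s,r))² dr ≤ M (s₀'−s₀)^β for all 0 ≤ s < s' ≤ 1 and 0 ≤ s₀ < s₀' ≤ 1. That is, K satisfies conditions (ii') and (iii) of hypothesis (H1'). -/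
open MeasureTheory Set

lemma aux_rpow_sq {x : ℝ} (hx : 0 ≤ x) (a : ℝ) : (x ^ a) ^ 2 = x ^ (2 * a) := by
  rw [mul_comm, Real.rpow_mul hx, Real.rpow_two]

lemma aux_subadd {H y d : ℝ} (hH0 : 0 ≤ H) (hH1 : H ≤ 1) (hy : 0 ≤ y) (hd : 0 ≤ d) :
    (y + d) ^ H ≤ y ^ H + d ^ H := by
  have h := NNReal.coe_le_coe.2
    (NNReal.rpow_add_le_add_rpow (⟨y, hy⟩ : NNReal) (⟨d, hd⟩ : NNReal) hH0 hH1)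
  exact h

lemma aux_Q {H x y : ℝ} (hH0 : 0 < H) (hH1 : H < 1) (hy : 0 ≤ y) (hxy : y ≤ x) (hx1 : x ≤ 1) :
    x ^ (2 * H) - y ^ (2 * H) ≤ 2 * (x - y) ^ H := by
  have hx0 : 0 ≤ x := hy.trans hxy
  have hd : 0 ≤ x - y := sub_nonneg.2 hxy
  have hsub : x ^ H ≤ y ^ H + (x - y) ^ H := by
    have h := aux_subadd hH0.le hH1.le hy hd
    rwa [add_sub_cancel] at h
  have hxH1 : x ^ H ≤ 1 := Real.rpow_le_one hx0 hx1 hH0.le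
  have hyH : 0 ≤ y ^ H := Real.rpow_nonneg hy H
  have hyHx : y ^ H ≤ x ^ H := Real.rpow_le_rpow hy hxy hH0.le
  have hdH : 0 ≤ (x - y) ^ H := Real.rpow_nonneg hd H
  have e1 : x ^ (2 * H) = x ^ H * x ^ H := by
    rw [two_mul, Real.rpow_add' hx0 (by intro h; nlinarith)]
  have e2 : y ^ (2 * H) = y ^ H * y ^ H := by
    rw [two_mul, Real.rpow_add' hy (by intro h; nlinarith)]
  nlinarith [mul_le_mul (show x ^ H - y ^ H ≤ (x - y) ^ H by linarith)
    (show x ^ H + y ^ H ≤ 2 by linarith) (by positivity) hdH]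

lemma aux_int {p : ℝ} (hp : (-1:ℝ) < p) {a b t : ℝ} (hab : a ≤ b) (hbt : b ≤ t) :
    ∫ r in Icc a b, (t - r) ^ p = ((t - a) ^ (p + 1) - (t - b) ^ (p + 1)) / (p + 1) := by
  rw [MeasureTheory.integral_Icc_eq_integral_Ioc, ← intervalIntegral.integral_of_le hab,
    intervalIntegral.integral_comp_sub_left (fun x => x ^ p) t,
    integral_rpow (Or.inl hp)]

lemma aux_ii {p : ℝ} (hp : (-1:ℝ) < p) (t a b : ℝ) :
    IntegrableOn (fun r => (t - r) ^ p) (Icc a b) := by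
  rcases le_or_gt a b with hab | hab
  · rw [integrableOn_Icc_iff_integrableOn_Ioc]
    have h := ((intervalIntegral.intervalIntegrable_rpow' hp (a := t - b) (b := t - a)).comp_sub_left t).symm
    have h2 : IntervalIntegrable (fun r => (t - r) ^ p) volume a b := by
      simpa [sub_sub_cancel] using h
    exact (intervalIntegrable_iff_integrableOn_Ioc_of_le hab).mp h2
  · simp [Icc_eq_empty_of_lt hab]

lemma aux_sq_diff {X Y : ℝ} (hX : 0 ≤ X) (hY : 0 ≤ Y) :
    (X - Y) ^ 2 ≤ |X ^ 2 - Y ^ 2| := by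
  rcases le_total Y X with h | h
  · rw [abs_of_nonneg (by nlinarith)]
    nlinarith [mul_nonneg hY (sub_nonneg.2 h)]
  · rw [abs_of_nonpos (by nlinarith)]
    nlinarith [mul_nonneg hX (sub_nonneg.2 h)]

lemma aux_ind_int {f : ℝ → ℝ} {T S : Set ℝ} (hT : MeasurableSet T)
    (h : IntegrableOn f (T ∩ S)) : IntegrableOn (Set.indicator T f) S := by
  have h2 : Integrable f ((volume.restrict S).restrict T) := by
    rwa [Measure.restrict_restrict hT]
  exact (integrable_indicator_iff hT).2 h2

lemma aux_iii {H : ℝ} (hH0 : 0 < H) (hH1 : H < 1) {t s₀ s₀' : ℝ} (ht0 : 0 ≤ t) (ht1 : t ≤ 1)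
    (h0 : 0 ≤ s₀) (h01 : s₀ ≤ s₀') :
    ∫ r in Icc s₀ s₀', Set.indicator (Icc (0:ℝ) t) (fun r => (t - r) ^ (2 * H - 1)) r
      ≤ (s₀' - s₀) ^ H / H := by
  have hp : (-1:ℝ) < 2 * H - 1 := by linarith
  rw [setIntegral_indicator measurableSet_Icc, Icc_inter_Icc, sup_eq_left.2 h0]
  rcases le_or_gt s₀ (s₀' ⊓ t) with hsb | hsb
  · have hbt : s₀' ⊓ t ≤ t := min_le_right _ _
    rw [aux_int hp hsb hbt, show (2 * H - 1) + 1 = 2 * H by ring]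
    have hQ := aux_Q (x := t - s₀) (y := t - (s₀' ⊓ t)) hH0 hH1 (by linarith)
      (by have := min_le_left s₀' t; linarith) (by linarith)
    rw [show t - s₀ - (t - s₀' ⊓ t) = s₀' ⊓ t - s₀ by ring] at hQ
    have hble : s₀' ⊓ t - s₀ ≤ s₀' - s₀ := by
      have := min_le_left s₀' t; linarith
    have hmono : (s₀' ⊓ t - s₀) ^ H ≤ (s₀' - s₀) ^ H :=
      Real.rpow_le_rpow (by linarith) hble hH0.le
    rw [div_le_div_iff₀ (by linarith) hH0]
    nlinarith
  · rw [Icc_eq_empty (not_le.2 hsb)]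
    simp only [Measure.restrict_empty, integral_zero_measure]
    exact div_nonneg (Real.rpow_nonneg (by linarith) H) hH0.le

lemma aux_A {H s s' : ℝ} (hH0 : 0 < H) (hH1 : H < 1)
    (hs0 : 0 ≤ s) (hss : s < s') (hs1 : s' ≤ 1) :
    ∫ r in Icc (0:ℝ) s, |(s' - r) ^ (2 * H - 1) - (s - r) ^ (2 * H - 1)|
      ≤ (s' - s) ^ H / H := by
  have hp : (-1:ℝ) < 2 * H - 1 := by linarith
  have hQ := aux_Q (x := s') (y := s) hH0 hH1 hs0 hss.le hs1
  have hd0 : 0 ≤ (s' - s) ^ (2 * H) := Real.rpow_nonneg (by linarith) _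
  have hdH : 0 ≤ (s' - s) ^ H := Real.rpow_nonneg (by linarith) _
  rcases le_or_gt 0 (2 * H - 1) with hp0 | hp0
  · have heq : EqOn (fun r => |(s' - r) ^ (2 * H - 1) - (s - r) ^ (2 * H - 1)|)
        (fun r => (s' - r) ^ (2 * H - 1) - (s - r) ^ (2 * H - 1)) (Icc (0:ℝ) s) := by
      intro r hr
      exact abs_of_nonneg (sub_nonneg.2
        (Real.rpow_le_rpow (by linarith [hr.2]) (by linarith) hp0))
    rw [setIntegral_congr_fun measurableSet_Icc heq,
      integral_sub (aux_ii hp s' 0 s) (aux_ii hp s 0 s),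
      aux_int hp hs0 (by linarith), aux_int hp hs0 le_rfl,
      show (2 * H - 1) + 1 = 2 * H by ring]
    simp only [sub_zero, sub_self]
    rw [Real.zero_rpow (by linarith), div_sub_div_same,
      div_le_div_iff₀ (by linarith) hH0]
    nlinarith [mul_le_mul_of_nonneg_right hQ hH0.le, mul_nonneg hd0 hH0.le]
  · rw [MeasureTheory.integral_Icc_eq_integral_Ico]
    have heq : EqOn (fun r => |(s' - r) ^ (2 * H - 1) - (s - r) ^ (2 * H - 1)|)
        (fun r => (s - r) ^ (2 * H - 1) - (s' - r) ^ (2 * H - 1)) (Ico (0:ℝ) s) := by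
      intro r hr
      dsimp only
      rw [abs_sub_comm]
      exact abs_of_nonneg (sub_nonneg.2
        (Real.rpow_le_rpow_of_nonpos (by linarith [hr.2]) (by linarith) (by linarith)))
    rw [setIntegral_congr_fun measurableSet_Ico heq,
      ← MeasureTheory.integral_Icc_eq_integral_Ico,
      integral_sub (aux_ii hp s 0 s) (aux_ii hp s' 0 s),
      aux_int hp hs0 le_rfl, aux_int hp hs0 (by linarith),
      show (2 * H - 1) + 1 = 2 * H by ring]
    simp only [sub_zero, sub_self]
    rw [Real.zero_rpow (by linarith)]
    have hs2 : s ^ (2 * H) ≤ s' ^ (2 * H) := Real.rpow_le_rpow hs0 hss.le (by linarith)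
    have hd1 : (s' - s) ^ (2 * H) ≤ (s' - s) ^ H :=
      Real.rpow_le_rpow_of_exponent_ge (by linarith) (by linarith) (by linarith)
    rw [div_sub_div_same, div_le_div_iff₀ (by linarith) hH0]
    nlinarith [mul_le_mul_of_nonneg_right hd1 hH0.le]

lemma aux_B {H s s' : ℝ} (hH0 : 0 < H) (hH1 : H < 1)
    (hs0 : 0 ≤ s) (hss : s < s') (hs1 : s' ≤ 1) :
    ∫ r in Ioc s s', (s' - r) ^ (2 * H - 1) ≤ (s' - s) ^ H / (2 * H) := by
  have hp : (-1:ℝ) < 2 * H - 1 := by linarith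
  rw [← MeasureTheory.integral_Icc_eq_integral_Ioc, aux_int hp hss.le le_rfl,
    show (2 * H - 1) + 1 = 2 * H by ring]
  simp only [sub_self]
  rw [Real.zero_rpow (by linarith), sub_zero]
  have hd1 : (s' - s) ^ (2 * H) ≤ (s' - s) ^ H :=
    Real.rpow_le_rpow_of_exponent_ge (by linarith) (by linarith) (by linarith)
  exact (div_le_div_iff_of_pos_right (by linarith)).2 hd1

lemma aux_part3 {H : ℝ} (hH0 : 0 < H) (hH1 : H < 1) {s s' s₀ s₀' : ℝ}
    (hs0 : 0 ≤ s) (hss : s < s') (hs1 : s' ≤ 1) (h0 : 0 ≤ s₀) (h00 : s₀ < s₀') (h11 : s₀' ≤ 1) :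
    ∫ r in Icc s₀ s₀',
      (Set.indicator (Icc (0:ℝ) s') (fun r => Real.sqrt (2 * Real.pi) * (s' - r) ^ (H - 1 / 2)) r
       - Set.indicator (Icc (0:ℝ) s) (fun r => Real.sqrt (2 * Real.pi) * (s - r) ^ (H - 1 / 2)) r) ^ 2
      ≤ (8 * Real.pi / H) * (s₀' - s₀) ^ H := by
  have hπ := Real.pi_pos
  have hp : (-1:ℝ) < 2 * H - 1 := by linarith
  set c := Real.sqrt (2 * Real.pi) with hc
  have hc2 : c ^ 2 = 2 * Real.pi := Real.sq_sqrt (by positivity)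
  set g : ℝ → ℝ → ℝ :=
    fun t r => Set.indicator (Icc (0:ℝ) t) (fun r => (t - r) ^ (2 * H - 1)) r with hg
  set F : ℝ → ℝ → ℝ :=
    fun t r => Set.indicator (Icc (0:ℝ) t) (fun r => c * (t - r) ^ (H - 1 / 2)) r with hF
  have hFsq : ∀ t r, (F t r) ^ 2 = 2 * Real.pi * g t r := by
    intro t r
    by_cases hr : r ∈ Icc (0:ℝ) t
    · simp only [hF, hg, Set.indicator_of_mem hr]
      rw [mul_pow, aux_rpow_sq (by linarith [hr.2] : (0:ℝ) ≤ t - r) (H - 1/2),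
        show 2 * (H - 1/2) = 2 * H - 1 by ring, hc2]
    · simp [hF, hg, Set.indicator_of_notMem hr]
  have hg_nonneg : ∀ t r, 0 ≤ g t r := fun t r =>
    Set.indicator_nonneg (fun x hx => Real.rpow_nonneg (by linarith [hx.2]) _) r
  have Ig : ∀ t, IntegrableOn (g t) (Icc s₀ s₀') := by
    intro t
    refine aux_ind_int measurableSet_Icc ?_
    rw [Icc_inter_Icc]
    exact aux_ii hp t _ _
  have Imaj : IntegrableOn (fun r => 2 * Real.pi * (2 * g s' r + 2 * g s r)) (Icc s₀ s₀') :=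
    ((((Ig s').const_mul 2).add ((Ig s).const_mul 2)).const_mul (2 * Real.pi))
  have hFm : ∀ t, Measurable (F t) := fun t =>
    (measurable_const.mul
      ((measurable_const.sub measurable_id).pow measurable_const)).indicator measurableSet_Icc
  have hpt : ∀ r, (F s' r - F s r) ^ 2 ≤ 2 * Real.pi * (2 * g s' r + 2 * g s r) := by
    intro r
    have h1 := hFsq s' r
    have h2 := hFsq s r
    nlinarith [sq_nonneg (F s' r + F s r)]
  have ID : IntegrableOn (fun r => (F s' r - F s r) ^ 2) (Icc s₀ s₀') := by
    refine MeasureTheory.Integrable.mono Imaj (((hFm s').sub (hFm s)).pow_const 2).aestronglyMeasurable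
      (ae_of_all _ fun r => ?_)
    rw [Real.norm_eq_abs, Real.norm_eq_abs, abs_of_nonneg (sq_nonneg _),
      abs_of_nonneg (by nlinarith [hg_nonneg s' r, hg_nonneg s r])]
    exact hpt r
  calc ∫ r in Icc s₀ s₀', (F s' r - F s r) ^ 2
      ≤ ∫ r in Icc s₀ s₀', 2 * Real.pi * (2 * g s' r + 2 * g s r) :=
        setIntegral_mono_on ID Imaj measurableSet_Icc (fun r _ => hpt r)
    _ = 2 * Real.pi * (2 * (∫ r in Icc s₀ s₀', g s' r) + 2 * (∫ r in Icc s₀ s₀', g s r)) := by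
        rw [MeasureTheory.integral_const_mul,
          integral_add ((Ig s').const_mul 2) ((Ig s).const_mul 2),
          MeasureTheory.integral_const_mul, MeasureTheory.integral_const_mul]
    _ ≤ 2 * Real.pi * (2 * ((s₀' - s₀) ^ H / H) + 2 * ((s₀' - s₀) ^ H / H)) := by
        have h1 := aux_iii hH0 hH1 (t := s') (by linarith) hs1 h0 h00.le
        have h2 := aux_iii hH0 hH1 (t := s) hs0 (by linarith) h0 h00.le
        gcongr
    _ = (8 * Real.pi / H) * (s₀' - s₀) ^ H := by
        field_simp
        ring

lemma aux_part2 {H : ℝ} (hH0 : 0 < H) (hH1 : H < 1) {s s' : ℝ}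
    (hs0 : 0 ≤ s) (hss : s < s') (hs1 : s' ≤ 1) :
    ∫ r in Icc (0:ℝ) 1,
      (Set.indicator (Icc (0:ℝ) s') (fun r => Real.sqrt (2 * Real.pi) * (s' - r) ^ (H - 1 / 2)) r
       - Set.indicator (Icc (0:ℝ) s) (fun r => Real.sqrt (2 * Real.pi) * (s - r) ^ (H - 1 / 2)) r) ^ 2
      ≤ (4 * Real.pi / H) * (s' - s) ^ H := by
  have hπ := Real.pi_pos
  have hp : (-1:ℝ) < 2 * H - 1 := by linarith
  set c := Real.sqrt (2 * Real.pi) with hc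
  have hc2 : c ^ 2 = 2 * Real.pi := Real.sq_sqrt (by positivity)
  set F : ℝ → ℝ → ℝ :=
    fun t r => Set.indicator (Icc (0:ℝ) t) (fun r => c * (t - r) ^ (H - 1 / 2)) r with hF
  set h₁ : ℝ → ℝ := fun r => |(s' - r) ^ (2 * H - 1) - (s - r) ^ (2 * H - 1)| with hh₁
  set h₂ : ℝ → ℝ := fun r => (s' - r) ^ (2 * H - 1) with hh₂
  have hsub2 : Ioc s s' ⊆ Icc (0:ℝ) 1 := by
    intro r hr
    have h := Set.mem_Ioc.1 hr
    exact Set.mem_Icc.2 ⟨by linarith [h.1], by linarith [h.2]⟩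
  set maj : ℝ → ℝ := fun r =>
    2 * Real.pi * (Set.indicator (Icc (0:ℝ) s) h₁ r + Set.indicator (Ioc s s') h₂ r) with hmaj
  -- pointwise bound
  have hpt : ∀ r, (F s' r - F s r) ^ 2 ≤ maj r := by
    intro r
    by_cases hr1 : r ∈ Icc (0:ℝ) s
    · have hr2 : r ∈ Icc (0:ℝ) s' := ⟨hr1.1, by linarith [hr1.2]⟩
      have hr3 : r ∉ Ioc s s' := fun h => absurd hr1.2 (not_le.2 h.1)
      simp only [hF, hmaj, Set.indicator_of_mem hr2, Set.indicator_of_mem hr1,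
        Set.indicator_of_notMem hr3, add_zero]
      have key := aux_sq_diff (X := (s' - r) ^ (H - 1/2)) (Y := (s - r) ^ (H - 1/2))
        (Real.rpow_nonneg (by linarith [hr2.2]) _) (Real.rpow_nonneg (by linarith [hr1.2]) _)
      rw [aux_rpow_sq (by linarith [hr2.2] : (0:ℝ) ≤ s' - r),
        aux_rpow_sq (by linarith [hr1.2] : (0:ℝ) ≤ s - r),
        show 2 * (H - 1/2) = 2 * H - 1 by ring] at key
      calc (c * (s' - r) ^ (H - 1/2) - c * (s - r) ^ (H - 1/2)) ^ 2
          = c ^ 2 * ((s' - r) ^ (H - 1/2) - (s - r) ^ (H - 1/2)) ^ 2 := by ring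
        _ ≤ 2 * Real.pi * h₁ r := by
            rw [hc2]
            exact mul_le_mul_of_nonneg_left key (by positivity)
    · by_cases hr2 : r ∈ Ioc s s'
      · have hr3 : r ∈ Icc (0:ℝ) s' := ⟨by linarith [hr2.1], hr2.2⟩
        simp only [hF, hmaj, Set.indicator_of_mem hr3, Set.indicator_of_notMem hr1,
          Set.indicator_of_mem hr2, zero_add, sub_zero]
        rw [mul_pow, aux_rpow_sq (by linarith [hr3.2] : (0:ℝ) ≤ s' - r),
          show 2 * (H - 1/2) = 2 * H - 1 by ring, hc2]
      · have hr3 : r ∉ Icc (0:ℝ) s' := by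
          intro h
          rcases le_or_gt r s with h' | h'
          · exact hr1 ⟨h.1, h'⟩
          · exact hr2 ⟨h', h.2⟩
        simp [hF, hmaj, Set.indicator_of_notMem hr1, Set.indicator_of_notMem hr2,
          Set.indicator_of_notMem hr3]
  -- integrability
  have Ih₁ : IntegrableOn (Set.indicator (Icc (0:ℝ) s) h₁) (Icc (0:ℝ) 1) := by
    refine aux_ind_int measurableSet_Icc ?_
    rw [inter_eq_left.2 (Icc_subset_Icc le_rfl (by linarith))]
    exact ((aux_ii hp s' 0 s).sub (aux_ii hp s 0 s)).abs
  have Ih₂ : IntegrableOn (Set.indicator (Ioc s s') h₂) (Icc (0:ℝ) 1) := by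
    refine aux_ind_int measurableSet_Ioc ?_
    rw [inter_eq_left.2 hsub2]
    exact (integrableOn_Icc_iff_integrableOn_Ioc).mp (aux_ii hp s' s s')
  have Imaj : IntegrableOn maj (Icc (0:ℝ) 1) := (Ih₁.add Ih₂).const_mul _
  have hmaj0 : ∀ r, 0 ≤ maj r := by
    intro r
    have a1 : 0 ≤ Set.indicator (Icc (0:ℝ) s) h₁ r :=
      Set.indicator_nonneg (fun x _ => abs_nonneg _) r
    have a2 : 0 ≤ Set.indicator (Ioc s s') h₂ r :=
      Set.indicator_nonneg (fun x hx => Real.rpow_nonneg (by linarith [hx.2]) _) r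
    positivity
  have hFm : ∀ t, Measurable (F t) := fun t =>
    (measurable_const.mul
      ((measurable_const.sub measurable_id).pow measurable_const)).indicator measurableSet_Icc
  have ID : IntegrableOn (fun r => (F s' r - F s r) ^ 2) (Icc (0:ℝ) 1) := by
    refine MeasureTheory.Integrable.mono Imaj
      (((hFm s').sub (hFm s)).pow_const 2).aestronglyMeasurable (ae_of_all _ fun r => ?_)
    rw [Real.norm_eq_abs, Real.norm_eq_abs, abs_of_nonneg (sq_nonneg _),
      abs_of_nonneg (hmaj0 r)]
    exact hpt r
  have hA : ∫ r in Icc (0:ℝ) 1, Set.indicator (Icc (0:ℝ) s) h₁ r ≤ (s' - s) ^ H / H := by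
    rw [setIntegral_indicator measurableSet_Icc,
      inter_eq_right.2 (Icc_subset_Icc le_rfl (by linarith))]
    exact aux_A hH0 hH1 hs0 hss hs1
  have hB : ∫ r in Icc (0:ℝ) 1, Set.indicator (Ioc s s') h₂ r ≤ (s' - s) ^ H / (2 * H) := by
    rw [setIntegral_indicator measurableSet_Ioc,
      inter_eq_right.2 hsub2]
    exact aux_B hH0 hH1 hs0 hss hs1
  have hdH : 0 ≤ (s' - s) ^ H := Real.rpow_nonneg (by linarith) _
  calc ∫ r in Icc (0:ℝ) 1, (F s' r - F s r) ^ 2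
      ≤ ∫ r in Icc (0:ℝ) 1, maj r :=
        setIntegral_mono_on ID Imaj measurableSet_Icc (fun r _ => hpt r)
    _ = 2 * Real.pi * ((∫ r in Icc (0:ℝ) 1, Set.indicator (Icc (0:ℝ) s) h₁ r)
          + ∫ r in Icc (0:ℝ) 1, Set.indicator (Ioc s s') h₂ r) := by
        rw [hmaj]
        rw [MeasureTheory.integral_const_mul, integral_add Ih₁ Ih₂]
    _ ≤ 2 * Real.pi * ((s' - s) ^ H / H + (s' - s) ^ H / (2 * H)) := by gcongr
    _ ≤ (4 * Real.pi / H) * (s' - s) ^ H := by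
        have e1 : 2 * Real.pi * ((s' - s) ^ H / H + (s' - s) ^ H / (2 * H))
            = 3 * Real.pi * (s' - s) ^ H / H := by
          field_simp
          ring
        have e2 : (4 * Real.pi / H) * (s' - s) ^ H = 4 * Real.pi * (s' - s) ^ H / H := by
          ring
        rw [e1, e2]
        gcongr ?_ / H
        nlinarith [mul_nonneg hdH hπ.le]

/-- The Holmgren–Riemann–Liouville kernel
`K(t,r) = √(2π)(t−r)^{H−1/2} 1_{[0,t]}(r)`, `0 < H < 1`, satisfies conditions (ii')
and (iii) of hypothesis (H1'). -/
theorem holmgren_riemann_liouville_kernel_satisfies_H1'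
    (H : ℝ) (hH : H ∈ Ioo (0:ℝ) 1)
    (K : ℝ → ℝ → ℝ)
    (hK : ∀ t r, K t r
      = Set.indicator (Icc (0:ℝ) t)
          (fun r => Real.sqrt (2 * Real.pi) * (t - r) ^ (H - 1 / 2)) r) :
    ∃ (G : ℝ → ℝ) (ρ M β : ℝ),
      Monotone G ∧ Continuous G ∧ 0 < ρ ∧ ρ ≤ 1 ∧ 0 < M ∧ 0 < β ∧
      (∀ s s' : ℝ, 0 ≤ s → s < s' → s' ≤ 1 →
        ∫ r in Icc (0:ℝ) 1, (K s' r - K s r) ^ 2 ≤ (G s' - G s) ^ ρ) ∧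
      (∀ s s' s₀ s₀' : ℝ, 0 ≤ s → s < s' → s' ≤ 1 → 0 ≤ s₀ → s₀ < s₀' → s₀' ≤ 1 →
        ∫ r in Icc s₀ s₀', (K s' r - K s r) ^ 2 ≤ M * (s₀' - s₀) ^ β) := by
  obtain ⟨hH0, hH1⟩ := hH
  have hπ := Real.pi_pos
  have hC : (0:ℝ) < 4 * Real.pi / H := by positivity
  refine ⟨fun t => (4 * Real.pi / H) ^ H⁻¹ * t, H, 8 * Real.pi / H, H,
    fun x y hxy => mul_le_mul_of_nonneg_left hxy (Real.rpow_nonneg hC.le _),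
    (continuous_const.mul continuous_id), hH0, hH1.le, by positivity, hH0, ?_, ?_⟩
  · intro s s' hs0 hss hs1
    simp only [hK]
    have hrhs : ((4 * Real.pi / H) ^ H⁻¹ * s' - (4 * Real.pi / H) ^ H⁻¹ * s) ^ H
        = (4 * Real.pi / H) * (s' - s) ^ H := by
      rw [← mul_sub, Real.mul_rpow (Real.rpow_nonneg hC.le _) (by linarith),
        ← Real.rpow_mul hC.le, inv_mul_cancel₀ (ne_of_gt hH0), Real.rpow_one]
    rw [hrhs]
    exact aux_part2 hH0 hH1 hs0 hss hs1
  · intro s s' s₀ s₀' hs0 hss hs1 h0 h00 h11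
    simp only [hK]
    exact aux_part3 hH0 hH1 hs0 hss hs1 h0 h00 h11
end

section
/- A Goursat kernel K(t,r) = Σ_{i=1}^I g_i(t)h_i(r)1_{[0,t]}(r) with g_i Hölder continuous of order γ₁ ∈ (0,1], h_i ∈ L²([0,1]), and F_i(t) = ∫₀ᵗ h_i(r)² dr Hölder continuous of order γ₂ ∈ (0,1], satisfies conditions (ii') and (iii) of hypothesis (H1'): ∫₀¹(K(s',r)−K(s,r))²dr ≤ (G(s')−G(s))^ρ for some increasing continuous G and ρ ∈ (0,1], and ∫_{s₀}^{s₀'}(K(s',r)−K(s,r))²dr ≤ M(s₀'−s₀)^β for some M, β > 0, uniformly in 0 ≤ s < s' ≤ 1. -/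
open MeasureTheory Set

set_option maxHeartbeats 1600000 in
/-- A Goursat kernel `K(t,r) = Σ_{i=1}^I g_i(t)h_i(r)1_{[0,t]}(r)`, with `g_i`
Hölder continuous of order `γ₁ ∈ (0,1]`, `h_i ∈ L²([0,1])`, and
`F_i(t) = ∫₀ᵗ h_i²` Hölder continuous of order `γ₂ ∈ (0,1]`, satisfies conditions
(ii') and (iii) of hypothesis (H1'). -/
theorem goursat_kernel_satisfies_H1'
    (I : ℕ) (g h : Fin I → ℝ → ℝ) (γ1 γ2 C1 C2 : ℝ)
    (hγ1 : 0 < γ1) (hγ1' : γ1 ≤ 1) (hγ2 : 0 < γ2) (hγ2' : γ2 ≤ 1)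
    (hC1 : 0 ≤ C1) (hC2 : 0 ≤ C2)
    (hghol : ∀ i, ∀ x ∈ Icc (0:ℝ) 1, ∀ y ∈ Icc (0:ℝ) 1,
      |g i x - g i y| ≤ C1 * |x - y| ^ γ1)
    (hhmeas : ∀ i, Measurable (h i))
    (hhL2 : ∀ i, MemLp (h i) 2 (volume.restrict (Icc (0:ℝ) 1)))
    (hFhol : ∀ i, ∀ s s' : ℝ, 0 ≤ s → s ≤ s' → s' ≤ 1 →
      ∫ r in Icc s s', (h i r) ^ 2 ≤ C2 * (s' - s) ^ γ2)
    (K : ℝ → ℝ → ℝ)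
    (hK : ∀ t r, K t r
      = Set.indicator (Icc (0:ℝ) t) (fun r => ∑ i, g i t * h i r) r) :
    ∃ (G : ℝ → ℝ) (ρ M β : ℝ),
      Monotone G ∧ Continuous G ∧ 0 < ρ ∧ ρ ≤ 1 ∧ 0 < M ∧ 0 < β ∧
      (∀ s s' : ℝ, 0 ≤ s → s < s' → s' ≤ 1 →
        ∫ r in Icc (0:ℝ) 1, (K s' r - K s r) ^ 2 ≤ (G s' - G s) ^ ρ) ∧
      (∀ s s' s₀ s₀' : ℝ, 0 ≤ s → s < s' → s' ≤ 1 → 0 ≤ s₀ → s₀ < s₀' → s₀' ≤ 1 →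
        ∫ r in Icc s₀ s₀', (K s' r - K s r) ^ 2 ≤ M * (s₀' - s₀) ^ β) := by
  classical
  -- bound on the g_i on [0,1]
  set B : Fin I → ℝ := fun i => C1 + |g i 0| with hBdef
  have hBnn : ∀ i, 0 ≤ B i := fun i => add_nonneg hC1 (abs_nonneg _)
  have hgB : ∀ i, ∀ t ∈ Icc (0:ℝ) 1, |g i t| ≤ B i := by
    intro i t ht
    have h1 := hghol i t ht 0 (by constructor <;> norm_num)
    have h2 : |t - 0| ^ γ1 ≤ 1 := by
      rw [sub_zero, abs_of_nonneg ht.1]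
      exact Real.rpow_le_one ht.1 ht.2 hγ1.le
    have h3 : |g i t| ≤ |g i t - g i 0| + |g i 0| := by
      have := abs_add_le (g i t - g i 0) (g i 0); simpa using this
    have h4 : C1 * |t - 0| ^ γ1 ≤ C1 * 1 := mul_le_mul_of_nonneg_left h2 hC1
    simp only [hBdef]
    linarith
  set Bm : ℝ := ∑ i, B i with hBmdef
  have hBmnn : 0 ≤ Bm := Finset.sum_nonneg fun i _ => hBnn i
  have hBle : ∀ i, B i ≤ Bm :=
    fun i => Finset.single_le_sum (f := B) (fun j _ => hBnn j) (Finset.mem_univ i)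
  have hgBm : ∀ i, ∀ t ∈ Icc (0:ℝ) 1, |g i t| ≤ Bm :=
    fun i t ht => (hgB i t ht).trans (hBle i)
  -- integrability of sums of squares
  have hh2 : ∀ i, IntegrableOn (fun r => (h i r)^2) (Icc (0:ℝ) 1) :=
    fun i => (hhL2 i).integrable_sq
  have hHint1 : IntegrableOn (fun r => ∑ i, (h i r)^2) (Icc (0:ℝ) 1) :=
    integrable_finset_sum _ (fun i _ => hh2 i)
  have hHnn : ∀ r, 0 ≤ ∑ i, (h i r)^2 :=
    fun r => Finset.sum_nonneg fun i _ => sq_nonneg _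
  -- integral bound on sums of squares
  have hHbd : ∀ a b : ℝ, 0 ≤ a → a ≤ b → b ≤ 1 →
      ∫ r in Icc a b, ∑ i, (h i r)^2 ≤ (I:ℝ) * C2 * (b - a)^γ2 := by
    intro a b ha hab hb1
    have hsub : Icc a b ⊆ Icc (0:ℝ) 1 := Icc_subset_Icc ha hb1
    rw [integral_finset_sum _ (fun i _ => (hh2 i).mono_set hsub)]
    calc ∑ i, ∫ r in Icc a b, (h i r)^2
        ≤ ∑ _i : Fin I, C2 * (b - a)^γ2 :=
          Finset.sum_le_sum fun i _ => hFhol i a b ha hab hb1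
      _ = (I:ℝ) * C2 * (b - a)^γ2 := by
          simp [Finset.sum_const, Finset.card_univ, mul_assoc]
  -- Cauchy-Schwarz pointwise bound
  have key : ∀ (a : Fin I → ℝ) (b : ℝ), (∀ i, |a i| ≤ b) → ∀ r : ℝ,
      (∑ i, a i * h i r)^2 ≤ (I:ℝ) * b^2 * (∑ i, (h i r)^2) := by
    intro a b hab r
    calc (∑ i, a i * h i r)^2 ≤ (I:ℝ) * ∑ i, (a i * h i r)^2 := by
          simpa using sq_sum_le_card_mul_sum_sq (s := Finset.univ)
            (f := fun i => a i * h i r)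
      _ ≤ (I:ℝ) * ∑ i, b^2 * (h i r)^2 := by
          apply mul_le_mul_of_nonneg_left _ (Nat.cast_nonneg I)
          apply Finset.sum_le_sum
          intro i _
          rw [mul_pow]
          apply mul_le_mul_of_nonneg_right _ (sq_nonneg _)
          calc (a i)^2 = |a i|^2 := (sq_abs _).symm
            _ ≤ b^2 := by
                apply pow_le_pow_left₀ (abs_nonneg _) (hab i)
      _ = (I:ℝ) * b^2 * ∑ i, (h i r)^2 := by
          rw [← Finset.mul_sum, ← mul_assoc]
  -- kernel difference on the various regions
  have hdiff1 : ∀ s s' : ℝ, 0 ≤ s → s ≤ s' → ∀ r ∈ Icc 0 s,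
      K s' r - K s r = ∑ i, (g i s' - g i s) * h i r := by
    intro s s' h0s hss' r hr
    have hr' : r ∈ Icc 0 s' := Icc_subset_Icc le_rfl hss' hr
    rw [hK, hK, indicator_of_mem hr' , indicator_of_mem hr,
      ← Finset.sum_sub_distrib]
    exact Finset.sum_congr rfl fun i _ => by ring
  have hdiff2 : ∀ s s' : ℝ, 0 ≤ s → ∀ r ∈ Ioc s s',
      K s' r - K s r = ∑ i, g i s' * h i r := by
    intro s s' h0s r hr
    have hr' : r ∈ Icc 0 s' := ⟨le_trans h0s hr.1.le, hr.2⟩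
    have hrn : r ∉ Icc 0 s := by
      simp only [mem_Icc, not_and, not_le]
      intro _; exact hr.1
    rw [hK, hK, indicator_of_mem hr', indicator_of_notMem hrn, sub_zero]
  have hdiff3 : ∀ s s' r : ℝ, s ≤ s' → s' < r → K s' r - K s r = 0 := by
    intro s s' r hss' hr
    have h1 : r ∉ Icc 0 s' := by
      simp only [mem_Icc, not_and, not_le]; intro _; exact hr
    have h2 : r ∉ Icc 0 s := by
      simp only [mem_Icc, not_and, not_le]; intro _; exact lt_of_le_of_lt hss' hr
    rw [hK, hK, indicator_of_notMem h1, indicator_of_notMem h2, sub_zero]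
  have hdiff0 : ∀ s s' r : ℝ, r < 0 → K s' r - K s r = 0 := by
    intro s s' r hr
    have h1 : r ∉ Icc (0:ℝ) s' := fun hm => absurd hm.1 (not_le.2 hr)
    have h2 : r ∉ Icc (0:ℝ) s := fun hm => absurd hm.1 (not_le.2 hr)
    rw [hK, hK, indicator_of_notMem h1, indicator_of_notMem h2, sub_zero]
  -- global pointwise bound
  have hglobal : ∀ s s' : ℝ, 0 ≤ s → s ≤ s' → s' ≤ 1 → ∀ r : ℝ,
      (K s' r - K s r)^2 ≤ (I:ℝ) * (2*Bm)^2 * (∑ i, (h i r)^2) := by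
    intro s s' h0s hss' hs1 r
    have hrhs : 0 ≤ (I:ℝ) * (2*Bm)^2 * (∑ i, (h i r)^2) :=
      mul_nonneg (mul_nonneg (Nat.cast_nonneg I) (sq_nonneg _)) (hHnn r)
    have hsmem : s ∈ Icc (0:ℝ) 1 := ⟨h0s, le_trans hss' hs1⟩
    have hs'mem : s' ∈ Icc (0:ℝ) 1 := ⟨le_trans h0s hss', hs1⟩
    rcases lt_or_ge r 0 with hr | hr
    · rw [hdiff0 s s' r hr]; simpa using hrhs
    rcases le_or_gt r s with hrs | hrs
    · rw [hdiff1 s s' h0s hss' r ⟨hr, hrs⟩]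
      apply key
      intro i
      have := abs_sub (g i s') (g i s)
      have h1 := hgB i s' hs'mem
      have h2 := hgB i s hsmem
      have h3 := hBle i
      calc |g i s' - g i s| ≤ |g i s'| + |g i s| := abs_sub _ _
        _ ≤ 2 * Bm := by linarith [hgBm i s' hs'mem, hgBm i s hsmem]
    rcases le_or_gt r s' with hrs' | hrs'
    · rw [hdiff2 s s' h0s r ⟨hrs, hrs'⟩]
      apply key
      intro i
      calc |g i s'| ≤ Bm := hgBm i s' hs'mem
        _ ≤ 2 * Bm := by linarith
    · rw [hdiff3 s s' r hss' hrs']; simpa using hrhs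
  -- measurability of the squared difference
  have hfm : ∀ t t' : ℝ, Measurable fun r => (K t' r - K t r)^2 := by
    intro t t'
    have e : (fun r => (K t' r - K t r)^2) = fun r =>
        ((Icc (0:ℝ) t').indicator (fun r => ∑ i, g i t' * h i r) r
          - (Icc (0:ℝ) t).indicator (fun r => ∑ i, g i t * h i r) r)^2 := by
      funext r; rw [hK, hK]
    rw [e]
    apply Measurable.pow_const
    apply Measurable.sub <;>
    · apply Measurable.indicator
      · exact Finset.measurable_sum _ fun i _ => (measurable_const.mul (hhmeas i))
      · exact measurableSet_Icc
  -- integrability of the squared difference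
  have hfint : ∀ s s' : ℝ, 0 ≤ s → s ≤ s' → s' ≤ 1 →
      IntegrableOn (fun r => (K s' r - K s r)^2) (Icc (0:ℝ) 1) := by
    intro s s' h0s hss' hs1
    refine Integrable.mono' (hHint1.const_mul ((I:ℝ)*(2*Bm)^2))
      ((hfm s s').aestronglyMeasurable) ?_
    filter_upwards with r
    rw [Real.norm_eq_abs, abs_of_nonneg (sq_nonneg _)]
    exact hglobal s s' h0s hss' hs1 r
  have hHc : ∀ cc : ℝ, IntegrableOn (fun r => cc * ∑ i, (h i r)^2) (Icc (0:ℝ) 1) :=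
    fun cc => hHint1.const_mul cc
  -- constants
  set A1 : ℝ := (I:ℝ)^2 * C1^2 * C2 with hA1def
  set A2 : ℝ := (I:ℝ)^2 * Bm^2 * C2 with hA2def
  have hA1nn : 0 ≤ A1 := by
    apply mul_nonneg (mul_nonneg (sq_nonneg _) (sq_nonneg _)) hC2
  have hA2nn : 0 ≤ A2 := by
    apply mul_nonneg (mul_nonneg (sq_nonneg _) (sq_nonneg _)) hC2
  set ρ : ℝ := min (min (γ1 + γ1) γ2) 1 with hρdef
  have hρpos : 0 < ρ := lt_min (lt_min (by linarith) hγ2) one_pos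
  have hρ1 : ρ ≤ 1 := min_le_right _ _
  set c : ℝ := (A1 + A2 + 1) ^ (1/ρ) with hcdef
  have hcnn : 0 ≤ c := Real.rpow_nonneg (by linarith) _
  have hcρ : c ^ ρ = A1 + A2 + 1 := by
    rw [hcdef, ← Real.rpow_mul (by linarith : (0:ℝ) ≤ A1 + A2 + 1),
      one_div_mul_cancel hρpos.ne', Real.rpow_one]
  refine ⟨fun t => c * t, ρ, (I:ℝ) * (2*Bm)^2 * ((I:ℝ) * C2) + 1, γ2,
    fun a b hab => mul_le_mul_of_nonneg_left hab hcnn,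
    continuous_const.mul continuous_id, hρpos, hρ1,
    by positivity, hγ2, ?_, ?_⟩
  · -- condition (ii')
    intro s s' h0s hss' hs1
    have hss'le := hss'.le
    have h0s' : (0:ℝ) ≤ s' := le_trans h0s hss'le
    have hs01 : s ≤ 1 := le_trans hss'le hs1
    have hx0 : 0 < s' - s := by linarith
    have hx1 : s' - s ≤ 1 := by linarith
    -- split the integral
    have hu1 : Icc (0:ℝ) 1 = Icc 0 s ∪ Ioc s 1 := (Icc_union_Ioc_eq_Icc h0s hs01).symm
    have hu2 : Ioc s (1:ℝ) = Ioc s s' ∪ Ioc s' 1 := (Ioc_union_Ioc_eq_Ioc hss'le hs1).symm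
    have hdisj1 : Disjoint (Icc (0:ℝ) s) (Ioc s 1) := by
      rw [Set.disjoint_left]; intro r hr hr'; exact absurd hr.2 (not_le.2 hr'.1)
    have hdisj2 : Disjoint (Ioc s s') (Ioc s' (1:ℝ)) := Ioc_disjoint_Ioc_of_le le_rfl
    have hint := hfint s s' h0s hss'le hs1
    have hi1 : IntegrableOn (fun r => (K s' r - K s r)^2) (Icc 0 s) :=
      hint.mono_set (Icc_subset_Icc le_rfl hs01)
    have hi2 : IntegrableOn (fun r => (K s' r - K s r)^2) (Ioc s s') :=
      hint.mono_set ((Ioc_subset_Icc_self).trans (Icc_subset_Icc h0s hs1))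
    have hi3 : IntegrableOn (fun r => (K s' r - K s r)^2) (Ioc s' 1) :=
      hint.mono_set ((Ioc_subset_Icc_self).trans (Icc_subset_Icc h0s' le_rfl))
    have hi23 : IntegrableOn (fun r => (K s' r - K s r)^2) (Ioc s 1) :=
      hint.mono_set ((Ioc_subset_Icc_self).trans (Icc_subset_Icc h0s le_rfl))
    have e1 : ∫ r in Icc (0:ℝ) 1, (K s' r - K s r)^2
        = (∫ r in Icc 0 s, (K s' r - K s r)^2) + ∫ r in Ioc s 1, (K s' r - K s r)^2 := by
      rw [hu1]
      exact setIntegral_union hdisj1 measurableSet_Ioc hi1 hi23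
    have e2 : ∫ r in Ioc s (1:ℝ), (K s' r - K s r)^2
        = (∫ r in Ioc s s', (K s' r - K s r)^2) + ∫ r in Ioc s' 1, (K s' r - K s r)^2 := by
      rw [hu2]
      exact setIntegral_union hdisj2 measurableSet_Ioc hi2 hi3
    have e3 : ∫ r in Ioc s' (1:ℝ), (K s' r - K s r)^2 = 0 := by
      rw [setIntegral_congr_fun measurableSet_Ioc (g := fun _ => (0:ℝ))
        (fun r hr => by rw [hdiff3 s s' r hss'le hr.1]; norm_num)]
      simp
    -- bound on [0,s]
    have b1 : ∫ r in Icc (0:ℝ) s, (K s' r - K s r)^2 ≤ A1 * ((s'-s)^γ1)^2 := by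
      have hb : ∀ r ∈ Icc (0:ℝ) s, (K s' r - K s r)^2
          ≤ (I:ℝ) * (C1*(s'-s)^γ1)^2 * (∑ i, (h i r)^2) := by
        intro r hr
        rw [hdiff1 s s' h0s hss'le r hr]
        apply key
        intro i
        have hg := hghol i s' ⟨h0s', hs1⟩ s ⟨h0s, hs01⟩
        rwa [abs_of_nonneg (by linarith : (0:ℝ) ≤ s' - s)] at hg
      have hXnn : (0:ℝ) ≤ (s'-s)^γ1 := Real.rpow_nonneg hx0.le _
      calc ∫ r in Icc (0:ℝ) s, (K s' r - K s r)^2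
          ≤ ∫ r in Icc (0:ℝ) s, (I:ℝ)*(C1*(s'-s)^γ1)^2 * (∑ i, (h i r)^2) :=
            setIntegral_mono_on hi1
              ((hHc _).mono_set (Icc_subset_Icc le_rfl hs01))
              measurableSet_Icc hb
        _ = (I:ℝ)*(C1*(s'-s)^γ1)^2 * ∫ r in Icc (0:ℝ) s, ∑ i, (h i r)^2 :=
            integral_const_mul _ _
        _ ≤ (I:ℝ)*(C1*(s'-s)^γ1)^2 * ((I:ℝ)*C2*(s-0)^γ2) := by
            apply mul_le_mul_of_nonneg_left (hHbd 0 s le_rfl h0s hs01)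
            positivity
        _ = A1 * ((s'-s)^γ1)^2 * (s-0)^γ2 := by rw [hA1def]; ring
        _ ≤ A1 * ((s'-s)^γ1)^2 := by
            have h1 : (s-0)^γ2 ≤ 1 := by
              rw [sub_zero]; exact Real.rpow_le_one h0s hs01 hγ2.le
            have h2 : 0 ≤ A1 * ((s'-s)^γ1)^2 := mul_nonneg hA1nn (sq_nonneg _)
            nlinarith
    -- bound on (s,s']
    have b2 : ∫ r in Ioc s s', (K s' r - K s r)^2 ≤ A2 * (s'-s)^γ2 := by
      have hb : ∀ r ∈ Ioc s s', (K s' r - K s r)^2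
          ≤ (I:ℝ) * Bm^2 * (∑ i, (h i r)^2) := by
        intro r hr
        rw [hdiff2 s s' h0s r hr]
        exact key _ _ (fun i => hgBm i s' ⟨h0s', hs1⟩) r
      calc ∫ r in Ioc s s', (K s' r - K s r)^2
          ≤ ∫ r in Ioc s s', (I:ℝ)*Bm^2 * (∑ i, (h i r)^2) :=
            setIntegral_mono_on hi2
              ((hHc _).mono_set
                ((Ioc_subset_Icc_self).trans (Icc_subset_Icc h0s hs1)))
              measurableSet_Ioc hb
        _ = (I:ℝ)*Bm^2 * ∫ r in Ioc s s', ∑ i, (h i r)^2 := integral_const_mul _ _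
        _ = (I:ℝ)*Bm^2 * ∫ r in Icc s s', ∑ i, (h i r)^2 := by
            rw [integral_Icc_eq_integral_Ioc]
        _ ≤ (I:ℝ)*Bm^2 * ((I:ℝ)*C2*(s'-s)^γ2) := by
            apply mul_le_mul_of_nonneg_left (hHbd s s' h0s hss'le hs1)
            positivity
        _ = A2 * (s'-s)^γ2 := by rw [hA2def]; ring
    -- combine
    have hfin : ∫ r in Icc (0:ℝ) 1, (K s' r - K s r)^2
        ≤ A1*((s'-s)^γ1)^2 + A2*(s'-s)^γ2 := by
      rw [e1, e2, e3, add_zero]; linarith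
    have hX1 : ((s'-s)^γ1)^2 = (s'-s)^(γ1+γ1) := by rw [sq, ← Real.rpow_add hx0]
    have hm1 : (s'-s)^(γ1+γ1) ≤ (s'-s)^ρ :=
      Real.rpow_le_rpow_of_exponent_ge hx0 hx1
        ((min_le_left _ _).trans (min_le_left _ _))
    have hm2 : (s'-s)^γ2 ≤ (s'-s)^ρ :=
      Real.rpow_le_rpow_of_exponent_ge hx0 hx1
        ((min_le_left _ _).trans (min_le_right _ _))
    have hρnn : 0 ≤ (s'-s)^ρ := Real.rpow_nonneg hx0.le _
    show ∫ r in Icc (0:ℝ) 1, (K s' r - K s r)^2 ≤ (c * s' - c * s)^ρ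
    rw [show c * s' - c * s = c * (s' - s) by ring,
      Real.mul_rpow hcnn hx0.le, hcρ]
    calc ∫ r in Icc (0:ℝ) 1, (K s' r - K s r)^2
        ≤ A1*((s'-s)^γ1)^2 + A2*(s'-s)^γ2 := hfin
      _ ≤ (A1 + A2 + 1) * (s'-s)^ρ := by
          rw [hX1]
          have t1 : A1*(s'-s)^(γ1+γ1) ≤ A1*(s'-s)^ρ :=
            mul_le_mul_of_nonneg_left hm1 hA1nn
          have t2 : A2*(s'-s)^γ2 ≤ A2*(s'-s)^ρ :=
            mul_le_mul_of_nonneg_left hm2 hA2nn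
          nlinarith
  · -- condition (iii)
    intro s s' s₀ s₀' h0s hss' hs1 h0s₀ hs₀ hs₀1
    have hsub : Icc s₀ s₀' ⊆ Icc (0:ℝ) 1 := Icc_subset_Icc h0s₀ hs₀1
    have hint := (hfint s s' h0s hss'.le hs1).mono_set hsub
    calc ∫ r in Icc s₀ s₀', (K s' r - K s r)^2
        ≤ ∫ r in Icc s₀ s₀', (I:ℝ) * (2*Bm)^2 * (∑ i, (h i r)^2) :=
          setIntegral_mono_on hint ((hHc _).mono_set hsub)
            measurableSet_Icc (fun r _ => hglobal s s' h0s hss'.le hs1 r)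
      _ = (I:ℝ) * (2*Bm)^2 * ∫ r in Icc s₀ s₀', ∑ i, (h i r)^2 :=
          integral_const_mul _ _
      _ ≤ (I:ℝ) * (2*Bm)^2 * ((I:ℝ) * C2 * (s₀' - s₀)^γ2) := by
          apply mul_le_mul_of_nonneg_left (hHbd s₀ s₀' h0s₀ hs₀.le hs₀1)
          positivity
      _ ≤ ((I:ℝ) * (2*Bm)^2 * ((I:ℝ) * C2) + 1) * (s₀' - s₀)^γ2 := by
          have hrp : (0:ℝ) ≤ (s₀' - s₀)^γ2 := Real.rpow_nonneg (by linarith) _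
          nlinarith
end
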